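/- arXiv:1701.01968 — 4 statements merged into one kernel-verified Lean document; each statement's English description precedes it below -/
import Mathlib

section
/- The natural density of squarefree integers is 6/π²; that is, lim_{N→∞} (1/N) Σ_{k=1}^{N} μ(k)² = 6/π², where μ is the Möbius function. -/
open Filter Finset ArithmeticFunction

-- d^2 ∣ b^2 * a with a squarefree iff d ∣ b
lemma sq_dvd_iff {a b d : ℕ} (ha : Squarefree a) (hb : b ≠ 0) :
    d ^ 2 ∣ b ^ 2 * a ↔ d ∣ b := by
  have ha0 : a ≠ 0 := ha.ne_zero
  constructor
  · intro h
    rcases eq_or_ne d 0 with rfl | hd0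
    · simp at h; omega
    rw [← Nat.factorization_le_iff_dvd hd0 hb]
    intro p
    have h2 := (Nat.factorization_le_iff_dvd (by positivity) (by positivity)).mpr h p
    have hsf := ha.natFactorization_le_one p
    simp [Nat.factorization_mul (pow_ne_zero 2 hb) ha0, Nat.factorization_pow] at h2 ⊢
    omega
  · intro h
    exact Dvd.dvd.mul_right (pow_dvd_pow_of_dvd h 2) a

lemma filter_eq_divisors {N k : ℕ} (hk : 1 ≤ k) (hkN : k ≤ N) {a b : ℕ}
    (hab : b ^ 2 * a = k) (ha : Squarefree a) :
    {d ∈ Finset.Icc 1 N | d ^ 2 ∣ k} = b.divisors := by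
  have hb : b ≠ 0 := by rintro rfl; simp at hab; omega
  ext d
  simp only [Finset.mem_filter, Finset.mem_Icc, Nat.mem_divisors, ← hab,
    sq_dvd_iff ha hb]
  constructor
  · rintro ⟨-, h⟩; exact ⟨h, hb⟩
  · rintro ⟨h, -⟩
    have hd1 : 1 ≤ d := Nat.one_le_iff_ne_zero.mpr (fun h0 => by subst h0; simp [hb.symm] at h; omega)
    have : d ≤ b := Nat.le_of_dvd (Nat.pos_of_ne_zero hb) h
    have : b ≤ b ^ 2 * a := by nlinarith [ha.ne_zero, Nat.pos_of_ne_zero ha.ne_zero, Nat.pos_of_ne_zero hb]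
    refine ⟨⟨hd1, by omega⟩, h⟩

lemma moebius_sq_eq_sum {N k : ℕ} (hk : 1 ≤ k) (hkN : k ≤ N) :
    (moebius k : ℤ) ^ 2 = ∑ d ∈ Finset.Icc 1 N with d ^ 2 ∣ k, moebius d := by
  obtain ⟨a, b, hab, ha⟩ := Nat.sq_mul_squarefree k
  rw [filter_eq_divisors hk hkN hab ha]
  have : ∑ d ∈ b.divisors, moebius d = if b = 1 then 1 else 0 := by
    have := (ArithmeticFunction.coe_mul_zeta_apply (f := (moebius : ArithmeticFunction ℤ)) (x := b))
    rw [ArithmeticFunction.moebius_mul_coe_zeta] at this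
    rw [← this, ArithmeticFunction.one_apply]
  rw [this]
  by_cases hb1 : b = 1
  · subst hb1
    simp only [one_pow, one_mul] at hab
    subst hab
    simp [ArithmeticFunction.moebius_sq_eq_one_of_squarefree ha]
  · rw [if_neg hb1]
    have hb0 : b ≠ 0 := by rintro rfl; simp at hab; omega
    have : ¬ Squarefree k := by
      intro hsq
      obtain ⟨p, hp, hpb⟩ := Nat.exists_prime_and_dvd hb1
      have : p * p ∣ k := by
        rw [← hab]; exact Dvd.dvd.mul_right (by rw [pow_two]; exact mul_dvd_mul hpb hpb) a
      exact hp.not_isUnit (hsq p this)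
    rw [ArithmeticFunction.moebius_eq_zero_of_not_squarefree this]
    ring

lemma swap_sum (N : ℕ) :
    ∑ k ∈ Finset.Icc 1 N, (moebius k : ℤ) ^ 2
      = ∑ d ∈ Finset.Icc 1 N, (moebius d : ℤ) * (N / d ^ 2 : ℕ) := by
  have h1 : ∀ k ∈ Finset.Icc 1 N, (moebius k : ℤ) ^ 2
      = ∑ d ∈ Finset.Icc 1 N with d ^ 2 ∣ k, moebius d := by
    intro k hk
    rw [Finset.mem_Icc] at hk
    exact moebius_sq_eq_sum hk.1 hk.2
  rw [Finset.sum_congr rfl h1]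
  simp_rw [Finset.sum_filter]
  rw [Finset.sum_comm]
  refine Finset.sum_congr rfl fun d _ => ?_
  rw [← Finset.sum_filter]
  rw [Finset.sum_const, nsmul_eq_mul, mul_comm]
  congr 1
  have : Finset.Icc 1 N = Finset.Ioc 0 N := rfl
  rw [this]
  exact_mod_cast congrArg Nat.cast (Nat.Ioc_filter_dvd_card_eq_div N (d ^ 2))

lemma summable_bound : Summable (fun n : ℕ => 1 / (n : ℝ) ^ 2) :=
  Real.summable_one_div_nat_pow.mpr one_lt_two

lemma summable_moebius_div : Summable (fun n : ℕ => (moebius n : ℝ) / (n : ℝ) ^ 2) := by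
  refine Summable.of_norm_bounded summable_bound fun n => ?_
  rcases eq_or_ne n 0 with rfl | hn
  · simp
  · rw [norm_div, norm_pow, Real.norm_natCast]
    apply div_le_div_of_nonneg_right ?_ ?_
    · rw [Real.norm_eq_abs]
      exact_mod_cast (ArithmeticFunction.abs_moebius_le_one (n := n))
    · positivity

lemma tsum_moebius_div : (∑' n : ℕ, (moebius n : ℝ) / (n : ℝ) ^ 2) = 6 / Real.pi ^ 2 := by
  have hpi : Real.pi ≠ 0 := Real.pi_ne_zero
  have hzeta : LSeries (fun n => ((ArithmeticFunction.zeta n : ℂ))) 2 = (Real.pi : ℂ) ^ 2 / 6 := by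
    rw [LSeries]
    have : ∀ n : ℕ, LSeries.term (fun n => ((ArithmeticFunction.zeta n : ℂ))) 2 n
        = ((1 / (n : ℝ) ^ 2 : ℝ) : ℂ) := by
      intro n
      rcases eq_or_ne n 0 with rfl | hn
      · simp [LSeries.term]
      · rw [LSeries.term_of_ne_zero hn]
        rw [show (2 : ℂ) = ((2 : ℕ) : ℂ) by norm_num, Complex.cpow_natCast]
        simp only [ArithmeticFunction.natCoe_apply, ArithmeticFunction.zeta_apply, hn,
          if_false]
        push_cast
        ring
    simp_rw [this]
    rw [← Complex.ofReal_tsum, hasSum_zeta_two.tsum_eq]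
    push_cast
    ring
  have hmu : LSeries (fun n => ((moebius n : ℂ))) 2 = 6 / (Real.pi : ℂ) ^ 2 := by
    have h2 : (1 : ℝ) < (2 : ℂ).re := by norm_num
    have := ArithmeticFunction.LSeries_zeta_mul_Lseries_moebius h2
    rw [hzeta] at this
    have hpic : ((Real.pi : ℂ)) ^ 2 ≠ 0 := pow_ne_zero 2 (Complex.ofReal_ne_zero.mpr hpi)
    rw [eq_div_iff hpic]
    linear_combination 6 * this
  have hterm : ∀ n : ℕ, LSeries.term (fun n => ((moebius n : ℂ))) 2 n
      = (((moebius n : ℝ) / (n : ℝ) ^ 2 : ℝ) : ℂ) := by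
    intro n
    rcases eq_or_ne n 0 with rfl | hn
    · simp [LSeries.term]
    · rw [LSeries.term_of_ne_zero hn,
        show (2 : ℂ) = ((2 : ℕ) : ℂ) by norm_num, Complex.cpow_natCast]
      push_cast
      ring
  have : ((∑' n : ℕ, (moebius n : ℝ) / (n : ℝ) ^ 2 : ℝ) : ℂ) = 6 / (Real.pi : ℂ) ^ 2 := by
    rw [Complex.ofReal_tsum, ← hmu, LSeries]
    exact tsum_congr fun n => (hterm n).symm
  exact_mod_cast this

noncomputable def f (N d : ℕ) : ℝ := (moebius d : ℝ) * ((N / d ^ 2 : ℕ) : ℝ) / N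

lemma f_eq_zero {N d : ℕ} (hd : d ∉ Finset.Icc 1 N) : f N d = 0 := by
  rw [Finset.mem_Icc] at hd
  push_neg at hd
  rcases Nat.eq_zero_or_pos d with rfl | hd1
  · simp [f]
  · have : N < d ^ 2 := lt_of_lt_of_le (hd hd1) (Nat.le_self_pow two_ne_zero d)
    simp [f, Nat.div_eq_of_lt this]

lemma floor_div_tendsto {d : ℕ} (hd : 1 ≤ d) :
    Tendsto (fun N : ℕ => ((N / d ^ 2 : ℕ) : ℝ) / N) atTop (nhds (1 / (d : ℝ) ^ 2)) := by
  have hd2 : (0 : ℝ) < (d : ℝ) ^ 2 := by positivity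
  have hlow : Tendsto (fun N : ℕ => 1 / (d : ℝ) ^ 2 - 1 / N) atTop (nhds (1 / (d : ℝ) ^ 2)) := by
    have := tendsto_one_div_atTop_nhds_zero_nat (𝕜 := ℝ)
    have h := (tendsto_const_nhds (x := 1 / (d : ℝ) ^ 2) (f := atTop)).sub this
    simpa using h
  refine tendsto_of_tendsto_of_tendsto_of_le_of_le' hlow tendsto_const_nhds ?_ ?_
  · filter_upwards [eventually_ge_atTop 1] with N hN
    have hN0 : (0 : ℝ) < N := by exact_mod_cast hN
    have key : (N : ℝ) < ((N / d ^ 2 : ℕ) : ℝ) * (d : ℝ) ^ 2 + (d : ℝ) ^ 2 := by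
      have h1 := Nat.div_add_mod N (d ^ 2)
      have h2 := Nat.mod_lt N (show 0 < d ^ 2 from pow_pos hd 2)
      have h1' : ((d ^ 2 * (N / d ^ 2) + N % d ^ 2 : ℕ) : ℝ) = (N : ℝ) := by exact_mod_cast congrArg (fun n : ℕ => (n : ℝ)) h1
      have h2' : ((N % d ^ 2 : ℕ) : ℝ) < (d : ℝ) ^ 2 := by exact_mod_cast h2
      push_cast at h1'
      linarith
    rw [div_sub_div _ _ hd2.ne' hN0.ne', div_le_div_iff₀ (by positivity) hN0]
    have h0 : (0 : ℝ) ≤ ((N / d ^ 2 : ℕ) : ℝ) := by positivity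
    nlinarith
  · filter_upwards [eventually_ge_atTop 1] with N hN
    have hN0 : (0 : ℝ) < N := by exact_mod_cast hN
    have key : ((N / d ^ 2 : ℕ) : ℝ) * (d : ℝ) ^ 2 ≤ (N : ℝ) := by
      exact_mod_cast Nat.cast_le.mpr (Nat.div_mul_le_self N (d ^ 2))
    rw [div_le_div_iff₀ hN0 hd2]
    nlinarith

theorem squarefree_density :
    Filter.Tendsto
      (fun N : ℕ => (1 / N : ℝ) * ∑ k ∈ Finset.Icc 1 N, ((moebius k : ℝ)) ^ 2)
      Filter.atTop (nhds (6 / Real.pi ^ 2)) := by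
  have heq : ∀ N : ℕ, (1 / N : ℝ) * ∑ k ∈ Finset.Icc 1 N, ((moebius k : ℝ)) ^ 2
      = ∑' d : ℕ, f N d := by
    intro N
    rw [tsum_eq_sum (s := Finset.Icc 1 N) (fun d hd => f_eq_zero hd)]
    have hs : ∑ k ∈ Finset.Icc 1 N, ((moebius k : ℝ)) ^ 2
        = ∑ d ∈ Finset.Icc 1 N, (moebius d : ℝ) * ((N / d ^ 2 : ℕ) : ℝ) := by
      have h := congrArg (fun z : ℤ => (z : ℝ)) (swap_sum N)
      push_cast at h
      exact h
    rw [hs, Finset.mul_sum]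
    refine Finset.sum_congr rfl fun d _ => ?_
    simp [f]
    ring
  simp_rw [heq]
  rw [← tsum_moebius_div]
  apply tendsto_tsum_of_dominated_convergence (bound := fun d : ℕ => 1 / (d : ℝ) ^ 2)
    summable_bound
  · intro d
    rcases Nat.eq_zero_or_pos d with rfl | hd
    · simpa [f] using tendsto_const_nhds
    · have := (floor_div_tendsto hd).const_mul ((moebius d : ℝ))
      simp only [f]
      convert this using 2 with N
      · ring
      · ring
  · filter_upwards [eventually_ge_atTop 1] with N hN d
    have hN0 : (0 : ℝ) < N := by exact_mod_cast hN
    rcases Nat.eq_zero_or_pos d with rfl | hd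
    · simp [f]
    · have hd2 : (0 : ℝ) < (d : ℝ) ^ 2 := by positivity
      have hmu : |(moebius d : ℝ)| ≤ 1 := by
        exact_mod_cast (ArithmeticFunction.abs_moebius_le_one (n := d))
      have hfl : ((N / d ^ 2 : ℕ) : ℝ) ≤ (N : ℝ) / (d : ℝ) ^ 2 := by
        rw [le_div_iff₀ hd2]
        exact_mod_cast Nat.div_mul_le_self N (d ^ 2)
      have h0 : (0 : ℝ) ≤ ((N / d ^ 2 : ℕ) : ℝ) := by positivity
      rw [f, Real.norm_eq_abs, abs_div, abs_mul, abs_of_nonneg h0, abs_of_pos hN0,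
        div_le_div_iff₀ hN0 hd2]
      have hle : |(moebius d : ℝ)| * ((N / d ^ 2 : ℕ) : ℝ) ≤ (N : ℝ) / (d : ℝ) ^ 2 := by
        calc |(moebius d : ℝ)| * ((N / d ^ 2 : ℕ) : ℝ) ≤ 1 * ((N : ℝ) / (d : ℝ) ^ 2) :=
              mul_le_mul hmu hfl h0 zero_le_one
          _ = (N : ℝ) / (d : ℝ) ^ 2 := one_mul _
      have := mul_le_mul_of_nonneg_right hle hd2.le
      rw [div_mul_cancel₀ _ hd2.ne'] at this
      linarith
end

section
/- Let (T, Σ_A⁺) be a one-sided subshift of finite type with positive topological entropy. Then there exists a point z ∈ Σ_A⁺ and a continuous function φ : Σ_A⁺ → ℝ such that limsup_{N→∞} (1/N) Σ_{n=1}^{N} μ(n) φ(Tⁿ(z)) > 0. In particular, Möbius orthogonality fails for (T, Σ_A⁺). -/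
open Filter Finset ArithmeticFunction

/-- The number of admissible words of length `n` of the one-sided subshift of finite
type over the alphabet `V` with adjacency relation `A`, i.e. words occurring as
initial segments of points of the subshift. -/
noncomputable def sftWordCount (V : Type*) (A : V → V → Prop) (n : ℕ) : ℕ :=
  Nat.card {w : Fin n → V // ∃ z : ℕ → V,
    (∀ k : ℕ, A (z k) (z (k + 1))) ∧ ∀ i : Fin n, z i = w i}

/-- The topological entropy `h(T) = limsup (log #Bₙ)/n` of the subshift. -/
noncomputable def sftEntropy (V : Type*) (A : V → V → Prop) : ℝ :=
  Filter.limsup (fun n : ℕ => Real.log (sftWordCount V A n) / n) Filter.atTop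

namespace SPE
variable {V : Type*}

/-- cycle type pattern of a block: X = (f,f,t,f,t), Y = (f,f,t,t,f). -/
def patF (b : Bool) (r : ℕ) : Bool :=
  if r < 2 then false else if r = 2 then true else if r = 3 then b else !b

/-- the infinite sequence of cycle types -/
def tseq (s : ℕ → Bool) (j : ℕ) : Bool := patF (s (j / 5)) (j % 5)

section
variable (cy : Bool → ℕ → V) (len : Bool → ℕ) (s : ℕ → Bool)

/-- lengths of the pieces: piece 0 is the one-letter prefix, piece j+1 is cycle j. -/
def lens (j : ℕ) : ℕ := if j = 0 then 1 else len (tseq s (j - 1))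

def vals (j i : ℕ) : V := if j = 0 then cy false (len false - 1) else cy (tseq s (j - 1)) i

def startp : ℕ → ℕ
  | 0 => 0
  | j + 1 => startp j + lens len s j

open Classical in
noncomputable def idx (n : ℕ) : ℕ := Nat.findGreatest (fun j => startp len s j ≤ n) n

noncomputable def Z (n : ℕ) : V :=
  vals cy len s (idx len s n) (n - startp len s (idx len s n))

def boff (b : Bool) : ℕ → ℕ
  | 0 => 0
  | r + 1 => boff b r + len (patF b r)

def Dlen : ℕ := 3 * len false + 2 * len true

noncomputable def blockLetter (b : Bool) (o : ℕ) : V :=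
  if o < boff len b 1 then cy false o
  else if o < boff len b 2 then cy false (o - boff len b 1)
  else if o < boff len b 3 then cy true (o - boff len b 2)
  else if o < boff len b 4 then cy b (o - boff len b 3)
  else cy (!b) (o - boff len b 4)

variable (hlen : ∀ b, 1 ≤ len b)
include hlen

lemma lens_pos (j : ℕ) : 1 ≤ lens len s j := by
  unfold lens; split <;> simp [hlen _]

lemma startp_lt (j : ℕ) : startp len s j < startp len s (j + 1) := by
  have := lens_pos len s hlen j
  simp [startp]; omega

lemma startp_mono : StrictMono (startp len s) :=
  strictMono_nat_of_lt_succ (startp_lt len s hlen)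

lemma le_startp (j : ℕ) : j ≤ startp len s j := by
  induction j with
  | zero => simp [startp]
  | succ n ih => have := lens_pos len s hlen n; simp [startp]; omega

lemma idx_spec (n : ℕ) :
    startp len s (idx len s n) ≤ n ∧ n < startp len s (idx len s n + 1) := by
  classical
  constructor
  · have h0 : startp len s 0 ≤ n := by simp [startp]
    exact Nat.findGreatest_spec (P := fun j => startp len s j ≤ n) (Nat.zero_le n) h0
  · by_contra h
    push_neg at h
    have hle : idx len s n + 1 ≤ n := le_trans (le_startp len s hlen _) h
    have := Nat.findGreatest_is_greatest (P := fun j => startp len s j ≤ n)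
      (n := n) (k := idx len s n + 1) (Nat.lt_succ_self _) hle
    exact this h

lemma idx_eq {j n : ℕ} (h1 : startp len s j ≤ n) (h2 : n < startp len s (j + 1)) :
    idx len s n = j := by
  classical
  have hspec := idx_spec len s hlen n
  rcases lt_trichotomy (idx len s n) j with h | h | h
  · have : startp len s (idx len s n + 1) ≤ startp len s j :=
      (startp_mono len s hlen).monotone (by omega)
    omega
  · exact h
  · have : startp len s (j + 1) ≤ startp len s (idx len s n) :=
      (startp_mono len s hlen).monotone (by omega)
    omega

lemma Z_spec {j i : ℕ} (hi : i < lens len s j) :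
    Z cy len s (startp len s j + i) = vals cy len s j i := by
  have h1 : startp len s j ≤ startp len s j + i := Nat.le_add_right _ _
  have h2 : startp len s j + i < startp len s (j + 1) := by
    simp [startp]; omega
  unfold Z
  rw [idx_eq len s hlen h1 h2]
  congr 1
  omega

lemma Z_in_cycle {j i : ℕ} (hi : i < len (tseq s j)) :
    Z cy len s (startp len s (j + 1) + i) = cy (tseq s j) i := by
  have : i < lens len s (j + 1) := by simpa [lens]
  rw [Z_spec cy len s hlen this]; simp [vals]


set_option linter.unusedSectionVars false

omit hlen

lemma patF_zero (b : Bool) : patF b 0 = false := rfl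
lemma patF_one (b : Bool) : patF b 1 = false := rfl
lemma patF_two (b : Bool) : patF b 2 = true := rfl
lemma patF_three (b : Bool) : patF b 3 = b := rfl
lemma patF_four (b : Bool) : patF b 4 = !b := rfl

lemma boff_one (b : Bool) : boff len b 1 = len false := by
  show 0 + len (patF b 0) = len false
  rw [patF_zero]; omega

lemma boff_two (b : Bool) : boff len b 2 = len false + len false := by
  show boff len b 1 + len (patF b 1) = _
  rw [patF_one, boff_one]

lemma boff_three (b : Bool) : boff len b 3 = len false + len false + len true := by
  show boff len b 2 + len (patF b 2) = _
  rw [patF_two, boff_two]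

lemma boff_four (b : Bool) : boff len b 4 = len false + len false + len true + len b := by
  show boff len b 3 + len (patF b 3) = _
  rw [patF_three, boff_three]

lemma boff_five (b : Bool) : boff len b 5 = Dlen len := by
  have : boff len b 5 = boff len b 4 + len (patF b 4) := rfl
  rw [this, boff_four, patF_four, Dlen]
  cases b <;> simp <;> ring

lemma tseq_block (k r : ℕ) (hr : r < 5) : tseq s (5 * k + r) = patF (s k) r := by
  unfold tseq
  have h1 : (5 * k + r) / 5 = k := by omega
  have h2 : (5 * k + r) % 5 = r := by omega
  rw [h1, h2]

include hlen

lemma startp_off (k : ℕ) : ∀ r ≤ 5,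
    startp len s (5 * k + 1 + r) = startp len s (5 * k + 1) + boff len (s k) r := by
  intro r hr
  induction r with
  | zero => simp [boff]
  | succ m ih =>
    have : startp len s (5 * k + 1 + (m + 1)) =
        startp len s (5 * k + 1 + m) + lens len s (5 * k + 1 + m) := rfl
    rw [this, ih (by omega)]
    have hl : lens len s (5 * k + 1 + m) = len (tseq s (5 * k + m)) := by
      simp [lens]
    rw [hl, tseq_block s k m (by omega)]
    simp [boff]; omega

lemma startp_block (k : ℕ) : startp len s (5 * k + 1) = 1 + k * Dlen len := by
  induction k with
  | zero => simp [startp, lens]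
  | succ m ih =>
    have h5 : 5 * (m + 1) + 1 = 5 * m + 1 + 5 := by ring
    rw [h5, startp_off len s hlen m 5 le_rfl, ih, boff_five]
    ring

lemma Dlen_pos : 1 ≤ Dlen len := by
  have := hlen false; unfold Dlen; omega

lemma boff_add_lt {b : Bool} {r i : ℕ} (hr : r < 5) (hi : i < len (patF b r)) :
    boff len b r + i < Dlen len := by
  have e0 : boff len b 0 = 0 := rfl
  have e1 := boff_one len b
  have e2 := boff_two len b
  have e3 := boff_three len b
  have e4 := boff_four len b
  have e5 : boff len b 5 = boff len b 4 + len (!b) := by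
    have : boff len b 5 = boff len b 4 + len (patF b 4) := rfl
    rw [this, patF_four]
  have e6 := boff_five len b
  have h1 := hlen false; have h2 := hlen true; have h3 := hlen b; have h4 := hlen (!b)
  interval_cases r <;>
    simp only [patF_zero, patF_one, patF_two, patF_three, patF_four] at hi <;> omega

omit hlen

lemma blockLetter_spec (b : Bool) {r i : ℕ} (hr : r < 5) (hi : i < len (patF b r)) :
    blockLetter cy len b (boff len b r + i) = cy (patF b r) i := by
  have e0 : boff len b 0 = 0 := rfl
  have e1 := boff_one len b
  have e2 := boff_two len b
  have e3 := boff_three len b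
  have e4 := boff_four len b
  unfold blockLetter
  interval_cases r <;>
    simp only [patF_zero, patF_one, patF_two, patF_three, patF_four] at hi ⊢ <;>
    split_ifs with h1 h2 h3 h4 <;> (try (congr 1; omega)) <;> (exfalso; omega)

lemma exists_boff_r {b : Bool} {o : ℕ} (ho : o < Dlen len) :
    ∃ r < 5, boff len b r ≤ o ∧ o < boff len b (r + 1) := by
  have e0 : boff len b 0 = 0 := rfl
  have e1 := boff_one len b
  have e2 := boff_two len b
  have e3 := boff_three len b
  have e4 := boff_four len b
  have e5 : boff len b (4 + 1) = Dlen len := boff_five len b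
  rcases Nat.lt_or_ge o (boff len b 1) with h | h
  · exact ⟨0, by omega, by omega, h⟩
  rcases Nat.lt_or_ge o (boff len b 2) with h2 | h2
  · exact ⟨1, by omega, h, h2⟩
  rcases Nat.lt_or_ge o (boff len b 3) with h3 | h3
  · exact ⟨2, by omega, h2, h3⟩
  rcases Nat.lt_or_ge o (boff len b 4) with h4 | h4
  · exact ⟨3, by omega, h3, h4⟩
  · exact ⟨4, by omega, h4, by omega⟩

include hlen

lemma Z_aligned (k : ℕ) {o : ℕ} (ho : o < Dlen len) :
    Z cy len s (1 + k * Dlen len + o) = blockLetter cy len (s k) o := by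
  obtain ⟨r, hr, hlo, hhi⟩ := exists_boff_r len (b := s k) ho
  have hco : boff len (s k) (r + 1) = boff len (s k) r + len (patF (s k) r) := rfl
  have hi : o - boff len (s k) r < len (patF (s k) r) := by omega
  have h1 : 1 + k * Dlen len + o = startp len s (5 * k + r + 1) + (o - boff len (s k) r) := by
    have ha := startp_off len s hlen k r (by omega)
    have hb := startp_block len s hlen k
    have hc : 5 * k + r + 1 = 5 * k + 1 + r := by omega
    rw [hc, ha, hb]
    omega
  have hi' : o - boff len (s k) r < len (tseq s (5 * k + r)) := by
    rw [tseq_block s k r hr]; exact hi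
  rw [h1, Z_in_cycle cy len s hlen hi', tseq_block s k r hr]
  have h2 : o = boff len (s k) r + (o - boff len (s k) r) := by omega
  conv_rhs => rw [h2]
  rw [blockLetter_spec cy len (s k) hr hi]

variable (p : V) (hcy0 : ∀ b, cy b 0 = p)
  (hint : ∀ b i, 0 < i → i < len b → cy b i ≠ p)

include hcy0 hint

lemma p_position {n : ℕ} (hn : 1 ≤ n) (hZ : Z cy len s n = p) :
    ∃ j, n = startp len s (j + 1) := by
  have hspec := idx_spec len s hlen n
  rcases Nat.eq_zero_or_pos (idx len s n) with h0 | hpos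
  · exfalso
    rw [h0] at hspec
    have h1 : startp len s (0 + 1) = 1 := by simp [startp, lens]
    omega
  · obtain ⟨J, hJ⟩ : ∃ J, idx len s n = J + 1 := ⟨idx len s n - 1, by omega⟩
    refine ⟨J, ?_⟩
    rw [hJ] at hspec
    set o := n - startp len s (J + 1) with ho
    have hov : Z cy len s n = vals cy len s (J + 1) o := by
      unfold Z; rw [hJ]
    have holt : o < lens len s (J + 1) := by
      have : startp len s (J + 1 + 1) = startp len s (J + 1) + lens len s (J + 1) := rfl
      omega
    rcases Nat.eq_zero_or_pos o with hz | hpo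
    · omega
    · exfalso
      have hv : vals cy len s (J + 1) o = cy (tseq s J) o := by simp [vals]
      have hlt : o < len (tseq s J) := by simpa [lens] using holt
      exact hint _ _ hpo hlt (by rw [← hv, ← hov, hZ])

variable (hdist : ¬(len false = len true ∧ ∀ i < len false, cy false i = cy true i))

include hdist

lemma forcing {j : ℕ} {α : Bool}
    (hmatch : ∀ i < len α, Z cy len s (startp len s (j + 1) + i) = cy α i)
    (hnext : Z cy len s (startp len s (j + 1) + len α) = p) :
    tseq s j = α := by
  set β := tseq s j with hβ
  have hstart2 : startp len s (j + 2) = startp len s (j + 1) + len β := by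
    show startp len s (j + 1) + lens len s (j + 1) = _
    simp [lens, hβ]
  have hbp : Z cy len s (startp len s (j + 2)) = p := by
    have := Z_in_cycle cy len s hlen (j := j + 1) (i := 0) (hlen (tseq s (j + 1)))
    simpa [hcy0] using this
  rcases lt_trichotomy (len β) (len α) with h | h | h
  · exfalso
    have hp2 : Z cy len s (startp len s (j + 1) + len β) = p := by rw [← hstart2]; exact hbp
    have hm2 := hmatch (len β) h
    rw [hp2] at hm2
    exact hint α (len β) (hlen β) h hm2.symm
  · by_contra hne
    have hall : ∀ i < len β, cy β i = cy α i := by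
      intro i hi
      rw [← Z_in_cycle cy len s hlen (j := j) (i := i) (by rw [← hβ] at *; omega)]
      exact hmatch i (by omega)
    apply hdist
    cases hα : α <;> cases hβ2 : β
    · exact absurd (hβ2.trans hα.symm) hne
    · rw [hα, hβ2] at h hall
      exact ⟨h.symm, fun i hi => (hall i (by omega)).symm⟩
    · rw [hα, hβ2] at h hall
      exact ⟨h, fun i hi => hall i hi⟩
    · exact absurd (hβ2.trans hα.symm) hne
  · exfalso
    have := Z_in_cycle cy len s hlen (j := j) (i := len α) (by rw [← hβ] at *; omega)
    rw [← hβ] at this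
    rw [this] at hnext
    exact hint β (len α) (hlen α) h hnext

omit hcy0 hint hdist

lemma rigidity {j : ℕ} {b : Bool}
    (h0 : tseq s j = false) (h1 : tseq s (j + 1) = false)
    (h2 : tseq s (j + 2) = true) (h3 : tseq s (j + 3) = b) :
    ∃ q, j = 5 * q ∧ s q = b := by
  set q := j / 5 with hq
  have hcase : j % 5 = 0 ∨ j % 5 = 1 ∨ j % 5 = 2 ∨ j % 5 = 3 ∨ j % 5 = 4 := by omega
  rcases hcase with h | h | h | h | h
  · refine ⟨q, by omega, ?_⟩
    rw [show j + 3 = 5 * q + 3 by omega, tseq_block s q 3 (by norm_num), patF_three] at h3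
    exact h3
  · exfalso
    rw [show j + 1 = 5 * q + 2 by omega, tseq_block s q 2 (by norm_num), patF_two] at h1
    simp at h1
  · exfalso
    rw [show j = 5 * q + 2 by omega, tseq_block s q 2 (by norm_num), patF_two] at h0
    simp at h0
  · exfalso
    rw [show j = 5 * q + 3 by omega, tseq_block s q 3 (by norm_num), patF_three] at h0
    rw [show j + 1 = 5 * q + 4 by omega, tseq_block s q 4 (by norm_num), patF_four] at h1
    rw [h0] at h1
    simp at h1
  · exfalso
    rw [show j + 2 = 5 * (q + 1) + 1 by omega, tseq_block s (q + 1) 1 (by norm_num), patF_one] at h2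
    simp at h2

include hcy0 hint hdist

lemma occurrence {n : ℕ} {b : Bool} (hn : 1 ≤ n)
    (hm : ∀ o < Dlen len, Z cy len s (n + o) = blockLetter cy len b o) :
    ∃ k, n = 1 + k * Dlen len ∧ s k = b := by
  have hD := Dlen_pos len hlen
  have hp0 : Z cy len s n = p := by
    have h1 := hm 0 (by omega)
    have hb0 : blockLetter cy len b 0 = p := by
      have h2 := blockLetter_spec cy len b (r := 0) (i := 0) (by norm_num)
        (by rw [patF_zero]; exact hlen false)
      rw [patF_zero, hcy0] at h2
      simpa [boff] using h2
    simpa [hb0] using h1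
  obtain ⟨j, hj⟩ := p_position cy len s hlen p hcy0 hint hn hp0
  have key : ∀ c, c < 4 → startp len s (j + c + 1) = n + boff len b c →
      tseq s (j + c) = patF b c ∧ startp len s (j + c + 1 + 1) = n + boff len b (c + 1) := by
    intro c hc hst
    have hco : boff len b (c + 1) = boff len b c + len (patF b c) := rfl
    have hmatch : ∀ i < len (patF b c),
        Z cy len s (startp len s (j + c + 1) + i) = cy (patF b c) i := by
      intro i hi
      rw [hst]
      have hlt : boff len b c + i < Dlen len := boff_add_lt len hlen (by omega) hi
      have h4 := hm (boff len b c + i) hlt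
      rw [show n + (boff len b c + i) = n + boff len b c + i by ring] at h4
      rw [h4, blockLetter_spec cy len b (by omega) hi]
    have hnext : Z cy len s (startp len s (j + c + 1) + len (patF b c)) = p := by
      rw [hst]
      have hpos1 : 0 < len (patF b (c + 1)) := hlen _
      have hlt : boff len b (c + 1) + 0 < Dlen len :=
        boff_add_lt len hlen (b := b) (r := c + 1) (i := 0) (by omega) hpos1
      have h4 := hm (boff len b (c + 1)) (by omega)
      have hbv : blockLetter cy len b (boff len b (c + 1)) = p := by
        have h5 := blockLetter_spec cy len b (r := c + 1) (i := 0) (by omega) hpos1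
        rw [hcy0] at h5
        simpa using h5
      rw [show n + boff len b c + len (patF b c) = n + boff len b (c + 1) by omega]
      rw [h4, hbv]
    have ht := forcing cy len s hlen p hcy0 hint hdist hmatch hnext
    refine ⟨ht, ?_⟩
    have h6 : startp len s (j + c + 1 + 1) =
        startp len s (j + c + 1) + lens len s (j + c + 1) := rfl
    rw [h6, hst]
    have h7 : lens len s (j + c + 1) = len (tseq s (j + c)) := by simp [lens]
    rw [h7, ht, hco]
    ring
  have k0 := key 0 (by omega) (by rw [← hj]; simp [boff])
  have k1 := key 1 (by omega) (by have := k0.2; simpa using this)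
  have k2 := key 2 (by omega) (by have := k1.2; simpa using this)
  have k3 := key 3 (by omega) (by have := k2.2; simpa using this)
  have h0 : tseq s j = false := by have := k0.1; rwa [patF_zero] at this
  have h1 : tseq s (j + 1) = false := by have := k1.1; rwa [patF_one] at this
  have h2 : tseq s (j + 2) = true := by have := k2.1; rwa [patF_two] at this
  have h3 : tseq s (j + 3) = b := by have := k3.1; rwa [patF_three] at this
  obtain ⟨q, hq, hsq⟩ := rigidity len s hlen h0 h1 h2 h3
  refine ⟨q, ?_, hsq⟩
  rw [hj, hq]
  rw [show 5 * q + 1 = 5 * q + 1 from rfl] at *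
  exact startp_block len s hlen q

omit hcy0 hint hdist

variable (A : V → V → Prop)
  (hchain : ∀ b i, i + 1 < len b → A (cy b i) (cy b (i + 1)))
  (hclose : ∀ b, A (cy b (len b - 1)) p)

include hcy0 hchain hclose

lemma Z_adm (n : ℕ) : A (Z cy len s n) (Z cy len s (n + 1)) := by
  have hspec := idx_spec len s hlen n
  set J := idx len s n with hJ
  set o := n - startp len s J with ho
  have hn : n = startp len s J + o := by omega
  have hnext : startp len s (J + 1) = startp len s J + lens len s J := rfl
  have holt : o < lens len s J := by omega
  have z1 : Z cy len s n = vals cy len s J o := by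
    rw [hn]; exact Z_spec cy len s hlen holt
  clear_value J
  clear ho hJ
  clear_value o
  rcases Nat.lt_or_ge (o + 1) (lens len s J) with hlt | hge
  · have z2 : Z cy len s (n + 1) = vals cy len s J (o + 1) := by
      rw [show n + 1 = startp len s J + (o + 1) by omega]
      exact Z_spec cy len s hlen hlt
    rw [z1, z2]
    rcases Nat.eq_zero_or_pos J with h0 | hpos
    · exfalso; rw [h0] at hlt; simp [lens] at hlt
    · obtain ⟨J', rfl⟩ : ∃ J', J = J' + 1 := ⟨J - 1, by omega⟩
      simp only [vals, Nat.succ_ne_zero, if_false, Nat.add_sub_cancel]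
      have hl2 : o + 1 < len (tseq s J') := by simpa [lens] using hlt
      exact hchain _ _ hl2
  · have hb : n + 1 = startp len s (J + 1) := by omega
    have z2 : Z cy len s (n + 1) = p := by
      rw [hb]
      have h8 := Z_in_cycle cy len s hlen (j := J) (i := 0) (hlen (tseq s J))
      simpa [hcy0] using h8
    rw [z1, z2]
    rcases Nat.eq_zero_or_pos J with h0 | hpos
    · rw [h0]; simp only [vals, if_pos rfl]; exact hclose false
    · obtain ⟨J', rfl⟩ : ∃ J', J = J' + 1 := ⟨J - 1, by omega⟩
      have hov : o = len (tseq s J') - 1 := by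
        have h9 : lens len s (J' + 1) = len (tseq s J') := by simp [lens]
        omega
      simp only [vals, Nat.succ_ne_zero, if_false, Nat.add_sub_cancel]
      rw [hov]
      exact hclose _

end

set_option linter.unusedSectionVars false
-- counting section

section Count
variable {V : Type*} (A : V → V → Prop)

def Closed (p : V) (u : List V) : Prop :=
  u.Chain' A ∧ u.head? = some p ∧ u.getLast? = some p

def FirstRet (p : V) (u : List V) : Prop :=
  u.Chain' A ∧ 2 ≤ u.length ∧ u.head? = some p ∧ u.getLast? = some p ∧
    ∀ i, 0 < i → i < u.length - 1 → u[i]? ≠ some p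

open Classical in
noncomputable def LD (u : List V) (a : V) : ℕ :=
  if h : ((Finset.range u.length).filter fun i => u[i]? = some a).Nonempty
  then ((Finset.range u.length).filter fun i => u[i]? = some a).max' h else 0

omit A in
lemma LD_spec {u : List V} {a : V} (h : a ∈ u) :
    u[LD u a]? = some a ∧ ∀ i, LD u a < i → u[i]? ≠ some a := by
  classical
  obtain ⟨m, hm⟩ := List.mem_iff_getElem?.mp h
  have hmlt : m < u.length := (List.getElem?_eq_some_iff.mp hm).1
  have hne : ((Finset.range u.length).filter fun i => u[i]? = some a).Nonempty :=
    ⟨m, by simp only [Finset.mem_filter, Finset.mem_range]; exact ⟨hmlt, hm⟩⟩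
  rw [LD, dif_pos hne]
  constructor
  · have h2 := Finset.max'_mem _ hne
    simp only [Finset.mem_filter, Finset.mem_range] at h2
    exact h2.2
  · intro i hi hcon
    have hilt : i < u.length := (List.getElem?_eq_some_iff.mp hcon).1
    have := Finset.le_max' ((Finset.range u.length).filter fun i => u[i]? = some a) i
      (by simp only [Finset.mem_filter, Finset.mem_range]; exact ⟨hilt, hcon⟩)
    omega

omit A in
lemma LD_lt {u : List V} {a : V} (h : a ∈ u) : LD u a < u.length :=
  (List.getElem?_eq_some_iff.mp (LD_spec h).1).1

omit A in
lemma LD_unique {u : List V} {a : V} {m : ℕ} (h1 : u[m]? = some a)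
    (h2 : ∀ i, m < i → u[i]? ≠ some a) : LD u a = m := by
  have ha : a ∈ u := List.mem_iff_getElem?.mpr ⟨m, h1⟩
  obtain ⟨hs1, hs2⟩ := LD_spec ha
  rcases lt_trichotomy (LD u a) m with h | h | h
  · exact absurd h1 (hs2 m h)
  · exact h
  · exact absurd hs1 (h2 _ h)

noncomputable def gf (u : List V) (a : V) : Option V := u[LD u a + 1]?

omit A in
lemma mem_drop_iff_LD {u : List V} {a : V} {m : ℕ} :
    a ∈ u.drop m ↔ (a ∈ u ∧ m ≤ LD u a) := by
  constructor
  · intro h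
    obtain ⟨i, hi⟩ := List.mem_iff_getElem?.mp h
    rw [List.getElem?_drop] at hi
    have ha : a ∈ u := List.mem_iff_getElem?.mpr ⟨m + i, hi⟩
    refine ⟨ha, ?_⟩
    by_contra hcon
    exact (LD_spec ha).2 (m + i) (by omega) hi
  · rintro ⟨ha, hm⟩
    have := (LD_spec ha).1
    refine List.mem_iff_getElem?.mpr ⟨LD u a - m, ?_⟩
    rw [List.getElem?_drop, show m + (LD u a - m) = LD u a by omega]
    exact this

omit A in
lemma LD_drop {u : List V} {a : V} {m : ℕ} (h : a ∈ u.drop m) :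
    LD (u.drop m) a = LD u a - m := by
  obtain ⟨ha, hm⟩ := mem_drop_iff_LD.mp h
  apply LD_unique
  · rw [List.getElem?_drop, show m + (LD u a - m) = LD u a by omega]
    exact (LD_spec ha).1
  · intro i hi
    rw [List.getElem?_drop]
    exact (LD_spec ha).2 (m + i) (by omega)

omit A in
lemma gf_drop {u : List V} {a : V} {m : ℕ} (h : a ∈ u.drop m) :
    gf (u.drop m) a = gf u a := by
  obtain ⟨ha, hm⟩ := mem_drop_iff_LD.mp h
  unfold gf
  rw [LD_drop h, List.getElem?_drop, show m + (LD u a - m + 1) = LD u a + 1 by omega]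

variable (Hcp : ∀ p (w1 w2 : List V), Closed A p w1 → Closed A p w2 →
  w1.length = w2.length → w1 = w2)

include Hcp in
lemma eq_of_data : ∀ n (u v : List V), u.length ≤ n → u.Chain' A → v.Chain' A →
    u.length = v.length → u.head? = v.head? →
    (∀ a, a ∈ u ↔ a ∈ v) → (∀ a ∈ u, LD u a = LD v a) → (∀ a ∈ u, gf u a = gf v a) →
    u = v := by
  intro n
  induction n with
  | zero =>
    intro u v hlen _ _ hl _ _ _ _
    have : u = [] := List.length_eq_zero_iff.mp (by omega)
    have hv : v = [] := List.length_eq_zero_iff.mp (by omega)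
    rw [this, hv]
  | succ n ih =>
    intro u v hlen hcu hcv hl hh hmem hLD hgf
    rcases Nat.eq_zero_or_pos u.length with h0 | hpos
    · have : u = [] := List.length_eq_zero_iff.mp h0
      have hv : v = [] := List.length_eq_zero_iff.mp (by omega)
      rw [this, hv]
    · -- u nonempty with head p
      obtain ⟨p, hp⟩ : ∃ p, u.head? = some p := by
        cases u with
        | nil => simp at hpos
        | cons a u' => exact ⟨a, rfl⟩
      have hpu : p ∈ u := by
        rw [List.head?_eq_getElem?] at hp
        exact List.mem_iff_getElem?.mpr ⟨0, hp⟩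
      have hpv : p ∈ v := (hmem p).mp hpu
      set t := LD u p with ht
      have htv : LD v p = t := (hLD p hpu).symm
      have htlt : t < u.length := LD_lt hpu
      have hsu := LD_spec hpu
      have hsv := LD_spec hpv
      rw [htv] at hsv
      -- closed prefixes agree
      have hclu : Closed A p (u.take (t + 1)) := by
        refine ⟨hcu.take _, ?_, ?_⟩
        · rw [List.head?_eq_getElem?, List.getElem?_take, if_pos (by omega),
            ← List.head?_eq_getElem?]
          exact hp
        · rw [List.getLast?_eq_getElem?, List.length_take]
          rw [show min (t + 1) u.length = t + 1 by omega]
          rw [List.getElem?_take, if_pos (by omega)]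
          simpa using hsu.1
      have hclv : Closed A p (v.take (t + 1)) := by
        refine ⟨hcv.take _, ?_, ?_⟩
        · rw [List.head?_eq_getElem?, List.getElem?_take, if_pos (by omega),
            ← List.head?_eq_getElem?]
          exact hh ▸ hp
        · rw [List.getLast?_eq_getElem?, List.length_take]
          rw [show min (t + 1) v.length = t + 1 by omega]
          rw [List.getElem?_take, if_pos (by omega)]
          simpa using hsv.1
      have htake : u.take (t + 1) = v.take (t + 1) := by
        apply Hcp p _ _ hclu hclv
        rw [List.length_take, List.length_take]
        omega
      -- drops agree via ih
      have hdmemu : ∀ a, a ∈ u.drop (t + 1) ↔ a ∈ v.drop (t + 1) := by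
        intro a
        rw [mem_drop_iff_LD, mem_drop_iff_LD]
        constructor
        · rintro ⟨ha, hta⟩
          exact ⟨(hmem a).mp ha, by rw [← hLD a ha]; exact hta⟩
        · rintro ⟨ha, hta⟩
          have ha' : a ∈ u := (hmem a).mpr ha
          exact ⟨ha', by rw [hLD a ha']; exact hta⟩
      have hdrop : u.drop (t + 1) = v.drop (t + 1) := by
        apply ih
        · rw [List.length_drop]; omega
        · exact hcu.drop _
        · exact hcv.drop _
        · rw [List.length_drop, List.length_drop]; omega
        · rw [List.head?_drop, List.head?_drop]
          have hgu : u[t + 1]? = gf u p := by rw [gf, ← ht]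
          have hgv : v[t + 1]? = gf v p := by rw [gf, htv]
          rw [hgu, hgv]
          exact hgf p hpu
        · exact hdmemu
        · intro a ha
          have hav : a ∈ v.drop (t + 1) := (hdmemu a).mp ha
          rw [LD_drop ha, LD_drop hav]
          rw [hLD a (mem_drop_iff_LD.mp ha).1]
        · intro a ha
          have hav : a ∈ v.drop (t + 1) := (hdmemu a).mp ha
          rw [gf_drop ha, gf_drop hav]
          exact hgf a (mem_drop_iff_LD.mp ha).1
      calc u = u.take (t + 1) ++ u.drop (t + 1) := (List.take_append_drop _ _).symm
        _ = v.take (t + 1) ++ v.drop (t + 1) := by rw [htake, hdrop]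
        _ = v := List.take_append_drop _ _

omit Hcp in
lemma closed_unique (hFR : ∀ (p : V) (u v : List V), FirstRet A p u → FirstRet A p v → u = v) :
    ∀ p (w1 w2 : List V), Closed A p w1 → Closed A p w2 → w1.length = w2.length → w1 = w2 := by
  have main : ∀ m p (w1 w2 : List V), Closed A p w1 → Closed A p w2 →
      w1.length = m → w2.length = m → w1 = w2 := by
    intro m
    induction m using Nat.strong_induction_on with
    | _ m ih =>
      intro p w1 w2 h1 h2 hl1 hl2
      rcases Nat.lt_or_ge m 2 with hm | hm
      · interval_cases m
        · rw [List.length_eq_zero_iff.mp hl1, List.length_eq_zero_iff.mp hl2]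
        · obtain ⟨a, ha⟩ := List.length_eq_one_iff.mp hl1
          obtain ⟨b, hb⟩ := List.length_eq_one_iff.mp hl2
          have hap : a = p := by rw [ha] at h1; simpa using h1.2.1
          have hbp : b = p := by rw [hb] at h2; simpa using h2.2.1
          rw [ha, hb, hap, hbp]
      · classical
        have hex1 : ∃ i, 1 ≤ i ∧ w1[i]? = some p := by
          refine ⟨m - 1, by omega, ?_⟩
          have hg := h1.2.2
          rw [List.getLast?_eq_getElem?, hl1] at hg
          exact hg
        have hex2 : ∃ i, 1 ≤ i ∧ w2[i]? = some p := by
          refine ⟨m - 1, by omega, ?_⟩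
          have hg := h2.2.2
          rw [List.getLast?_eq_getElem?, hl2] at hg
          exact hg
        set r1 := Nat.find hex1 with hr1def
        set r2 := Nat.find hex2 with hr2def
        obtain ⟨hr1one, hr1p⟩ := Nat.find_spec hex1
        obtain ⟨hr2one, hr2p⟩ := Nat.find_spec hex2
        have hr1lt : r1 < m := by
          have := Nat.find_min' hex1 (m := m - 1) ⟨by omega, by
            have hg := h1.2.2
            rw [List.getLast?_eq_getElem?, hl1] at hg
            exact hg⟩
          omega
        have hr2lt : r2 < m := by
          have := Nat.find_min' hex2 (m := m - 1) ⟨by omega, by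
            have hg := h2.2.2
            rw [List.getLast?_eq_getElem?, hl2] at hg
            exact hg⟩
          omega
        have hfr1 : FirstRet A p (w1.take (r1 + 1)) := by
          refine ⟨h1.1.take _, ?_, ?_, ?_, ?_⟩
          · rw [List.length_take]; omega
          · rw [List.head?_eq_getElem?, List.getElem?_take, if_pos (by omega),
              ← List.head?_eq_getElem?]
            exact h1.2.1
          · rw [List.getLast?_eq_getElem?, List.length_take,
              show min (r1 + 1) w1.length - 1 = r1 by omega,
              List.getElem?_take, if_pos (by omega)]
            exact hr1p
          · intro i hi0 hilen
            rw [List.length_take, show min (r1 + 1) w1.length - 1 = r1 by omega] at hilen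
            rw [List.getElem?_take, if_pos (by omega)]
            exact fun hc => Nat.find_min hex1 (by omega : i < r1) ⟨by omega, hc⟩
        have hfr2 : FirstRet A p (w2.take (r2 + 1)) := by
          refine ⟨h2.1.take _, ?_, ?_, ?_, ?_⟩
          · rw [List.length_take]; omega
          · rw [List.head?_eq_getElem?, List.getElem?_take, if_pos (by omega),
              ← List.head?_eq_getElem?]
            exact h2.2.1
          · rw [List.getLast?_eq_getElem?, List.length_take,
              show min (r2 + 1) w2.length - 1 = r2 by omega,
              List.getElem?_take, if_pos (by omega)]
            exact hr2p
          · intro i hi0 hilen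
            rw [List.length_take, show min (r2 + 1) w2.length - 1 = r2 by omega] at hilen
            rw [List.getElem?_take, if_pos (by omega)]
            exact fun hc => Nat.find_min hex2 (by omega : i < r2) ⟨by omega, hc⟩
        have htake : w1.take (r1 + 1) = w2.take (r2 + 1) := hFR p _ _ hfr1 hfr2
        have hr12 : r1 = r2 := by
          have := congrArg List.length htake
          rw [List.length_take, List.length_take] at this
          omega
        have hcld1 : Closed A p (w1.drop r1) := by
          refine ⟨h1.1.drop _, ?_, ?_⟩
          · rw [List.head?_drop]; exact hr1p
          · rw [List.getLast?_eq_getElem?, List.length_drop, List.getElem?_drop, hl1,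
              show r1 + (m - r1 - 1) = m - 1 by omega]
            have hg := h1.2.2
            rw [List.getLast?_eq_getElem?, hl1] at hg
            exact hg
        have hcld2 : Closed A p (w2.drop r2) := by
          refine ⟨h2.1.drop _, ?_, ?_⟩
          · rw [List.head?_drop]; exact hr2p
          · rw [List.getLast?_eq_getElem?, List.length_drop, List.getElem?_drop, hl2,
              show r2 + (m - r2 - 1) = m - 1 by omega]
            have hg := h2.2.2
            rw [List.getLast?_eq_getElem?, hl2] at hg
            exact hg
        have hdrop : w1.drop r1 = w2.drop r2 := by
          apply ih (m - r1) (by omega) p _ _ hcld1 hcld2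
          · rw [List.length_drop]; omega
          · rw [List.length_drop]; omega
        have htk : w1.take r1 = w2.take r2 := by
          have e1 : w1.take r1 = (w1.take (r1 + 1)).take r1 := by
            rw [List.take_take, min_eq_left (by omega)]
          have e2 : w2.take r2 = (w2.take (r2 + 1)).take r2 := by
            rw [List.take_take, min_eq_left (by omega)]
          rw [e1, e2, htake, hr12]
        calc w1 = w1.take r1 ++ w1.drop r1 := (List.take_append_drop _ _).symm
          _ = w2.take r2 ++ w2.drop r2 := by rw [htk, hdrop]
          _ = w2 := List.take_append_drop _ _
  intro p w1 w2 a b c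
  exact main w1.length p w1 w2 a b rfl c.symm

section Card
variable [Fintype V]

include Hcp in
lemma words_le (n : ℕ) :
    sftWordCount V A n ≤
      (Fintype.card V + 1) *
        ((2 * (n + 1)) ^ Fintype.card V * (Fintype.card V + 1) ^ Fintype.card V) := by
  classical
  set W := {w : Fin n → V // ∃ z : ℕ → V,
    (∀ k : ℕ, A (z k) (z (k + 1))) ∧ ∀ i : Fin n, z i = w i} with hW
  have hchain : ∀ w : W, (List.ofFn w.1).Chain' A := by
    intro w
    refine List.isChain_iff_getElem.mpr ?_
    intro i hi
    rw [List.length_ofFn] at hi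
    obtain ⟨z, hz, hzw⟩ := w.2
    simp only [List.get_eq_getElem, List.getElem_ofFn]
    rw [← hzw ⟨i, by omega⟩, ← hzw ⟨i + 1, by omega⟩]
    exact hz i
  have hlenofn : ∀ w : W, (List.ofFn w.1).length = n := fun w => List.length_ofFn
  let G : W → Option V × (V → Bool × Fin (n + 1)) × (V → Option V) :=
    fun w => ((List.ofFn w.1).head?,
      fun a => (decide (a ∈ List.ofFn w.1),
        ⟨min (LD (List.ofFn w.1) a) n, by omega⟩),
      fun a => gf (List.ofFn w.1) a)
  have hinj : Function.Injective G := by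
    intro w1 w2 h
    set u := List.ofFn w1.1 with hu
    set v := List.ofFn w2.1 with hv
    have h1 : u.head? = v.head? := congrArg Prod.fst h
    have h2 := congrArg (fun x => x.2.1) h
    have h3 : (fun a => gf u a) = fun a => gf v a := congrArg (fun x => x.2.2) h
    have hmem : ∀ a, a ∈ u ↔ a ∈ v := by
      intro a
      have := congrArg Prod.fst (congrFun h2 a)
      exact decide_eq_decide.mp this
    have hLD : ∀ a ∈ u, LD u a = LD v a := by
      intro a ha
      have hav : a ∈ v := (hmem a).mp ha
      have hlu : LD u a < n := by rw [← hlenofn w1]; exact LD_lt ha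
      have hlv : LD v a < n := by rw [← hlenofn w2]; exact LD_lt hav
      have := congrArg (fun q => (Prod.snd q).val) (congrFun h2 a)
      simp only [G] at this
      rw [← hu, ← hv] at this
      omega
    have hgf : ∀ a ∈ u, gf u a = gf v a := fun a _ => congrFun h3 a
    have huv : u = v := by
      apply eq_of_data A Hcp n u v (le_of_eq (hlenofn w1)) (hchain w1) (hchain w2)
        ((hlenofn w1).trans (hlenofn w2).symm) h1 hmem hLD hgf
    exact Subtype.ext (List.ofFn_injective huv)
  have hcard : sftWordCount V A n ≤
      Nat.card (Option V × (V → Bool × Fin (n + 1)) × (V → Option V)) := by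
    exact Nat.card_le_card_of_injective G hinj
  rw [Nat.card_eq_fintype_card] at hcard
  simpa [Fintype.card_option, Fintype.card_prod, Fintype.card_fun, Fintype.card_fin,
    Fintype.card_bool, mul_comm] using hcard

end Card
omit Hcp in
lemma extraction [Fintype V] (hpos : 0 < sftEntropy V A) :
    ∃ (p : V) (c1 c2 : List V), FirstRet A p c1 ∧ FirstRet A p c2 ∧ c1 ≠ c2 := by
  classical
  by_contra hcon
  push_neg at hcon
  have hFR : ∀ (p : V) (u v : List V), FirstRet A p u → FirstRet A p v → u = v := by
    intro p u v h1 h2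
    by_contra hne
    obtain ⟨q, c1, c2, hc1, hc2, hnee⟩ : ∃ (p : V) (c1 c2 : List V),
        FirstRet A p c1 ∧ FirstRet A p c2 ∧ c1 ≠ c2 := ⟨p, u, v, h1, h2, hne⟩
    exact hnee (hcon q c1 c2 hc1 hc2)
  have Hcp := closed_unique A hFR
  have hb := words_le A Hcp
  set N := Fintype.card V with hN
  set h := sftEntropy V A with hh
  set f : ℕ → ℝ := fun n => Real.log (sftWordCount V A n) / n with hf
  have hf0 : ∀ n, 0 ≤ f n := by
    intro n
    apply div_nonneg _ (Nat.cast_nonneg n)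
    exact Real.log_natCast_nonneg _
  have hcb : Filter.IsCoboundedUnder (· ≤ ·) Filter.atTop f :=
    Filter.isCoboundedUnder_le_of_eventually_le Filter.atTop (x := 0)
      (Filter.Eventually.of_forall hf0)
  have hfreq : ∃ᶠ n in Filter.atTop, h / 2 < f n := by
    apply Filter.frequently_lt_of_lt_limsup hcb
    rw [hh, sftEntropy]
    exact half_lt_self hpos
  set C : ℝ := ((N : ℝ) + 1) ^ (N + 1) * 4 ^ N with hC
  have hCpos : 0 < C := by positivity
  -- eventually poly beats nothing: n^N * exp(-(h/2)n) < 1/C eventually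
  have harg : Filter.Tendsto (fun n : ℕ => (h / 2) * n) Filter.atTop Filter.atTop := by
    apply Filter.Tendsto.const_mul_atTop (half_pos hpos)
    exact tendsto_natCast_atTop_atTop
  have ht0 : Filter.Tendsto (fun x : ℝ => x ^ N * Real.exp (-x)) Filter.atTop (nhds 0) :=
    Real.tendsto_pow_mul_exp_neg_atTop_nhds_zero N
  have hcomp : Filter.Tendsto
      (fun n : ℕ => ((h / 2) * n) ^ N * Real.exp (-((h / 2) * n)) * (2 / h) ^ N)
      Filter.atTop (nhds (0 * (2 / h) ^ N)) :=
    Filter.Tendsto.mul_const _ (ht0.comp harg)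
  rw [zero_mul] at hcomp
  have hhne : h ≠ 0 := ne_of_gt hpos
  have hEq : ∀ n : ℕ, ((h / 2) * n) ^ N * Real.exp (-((h / 2) * n)) * (2 / h) ^ N
      = (n : ℝ) ^ N * Real.exp (-((h / 2) * n)) := by
    intro n
    have key : (h / 2) * (n : ℝ) * (2 / h) = (n : ℝ) := by
      field_simp
    have key2 : ((h / 2) * (n : ℝ)) ^ N * (2 / h) ^ N = (n : ℝ) ^ N := by
      rw [← mul_pow, key]
    calc ((h / 2) * n) ^ N * Real.exp (-((h / 2) * n)) * (2 / h) ^ N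
        = ((h / 2) * (n : ℝ)) ^ N * (2 / h) ^ N * Real.exp (-((h / 2) * n)) := by ring
      _ = (n : ℝ) ^ N * Real.exp (-((h / 2) * n)) := by rw [key2]
  have hcomp2 : Filter.Tendsto (fun n : ℕ => (n : ℝ) ^ N * Real.exp (-((h / 2) * n)))
      Filter.atTop (nhds 0) := by
    apply hcomp.congr
    intro n
    exact hEq n
  have hev : ∀ᶠ n : ℕ in Filter.atTop, (n : ℝ) ^ N * Real.exp (-((h / 2) * n)) < 1 / C := by
    have : (0 : ℝ) < 1 / C := by positivity
    exact Filter.Tendsto.eventually_lt_const this hcomp2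
  have hev1 : ∀ᶠ n in Filter.atTop, 1 ≤ n := Filter.eventually_ge_atTop 1
  obtain ⟨n, hn2, hn3, hn1⟩ := (hfreq.and_eventually (hev.and hev1)).exists
  -- now derive contradiction at n
  have hnpos : (0 : ℝ) < n := by exact_mod_cast hn1
  have hlog : (h / 2) * n < Real.log (sftWordCount V A n) := by
    rw [hf] at hn2
    simp only at hn2
    rw [lt_div_iff₀ hnpos] at hn2
    exact hn2
  have hcnpos : 1 ≤ sftWordCount V A n := by
    by_contra hcz
    have hz : sftWordCount V A n = 0 := by omega
    rw [hz] at hlog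
    simp only [Nat.cast_zero, Real.log_zero] at hlog
    nlinarith [half_pos hpos]
  have hexp : Real.exp ((h / 2) * n) < (sftWordCount V A n : ℝ) := by
    have hcpos : (0 : ℝ) < sftWordCount V A n := by exact_mod_cast hcnpos
    calc Real.exp ((h / 2) * n) < Real.exp (Real.log (sftWordCount V A n)) :=
          Real.exp_lt_exp.mpr hlog
      _ = _ := Real.exp_log hcpos
  have hpoly : (sftWordCount V A n : ℝ) ≤ C * (n : ℝ) ^ N := by
    have hbn := hb n
    have hbn' : (sftWordCount V A n : ℝ) ≤
        ((N : ℝ) + 1) * ((2 * ((n : ℝ) + 1)) ^ N * ((N : ℝ) + 1) ^ N) := by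
      exact_mod_cast hbn
    have hn1' : (1 : ℝ) ≤ n := by exact_mod_cast hn1
    have h2n : (2 : ℝ) * ((n : ℝ) + 1) ≤ 4 * n := by nlinarith
    have hp1 : (2 * ((n : ℝ) + 1)) ^ N ≤ (4 * (n : ℝ)) ^ N :=
      pow_le_pow_left₀ (by positivity) h2n N
    calc (sftWordCount V A n : ℝ) ≤ _ := hbn'
      _ ≤ ((N : ℝ) + 1) * ((4 * (n : ℝ)) ^ N * ((N : ℝ) + 1) ^ N) := by
        apply mul_le_mul_of_nonneg_left _ (by positivity)
        apply mul_le_mul_of_nonneg_right hp1 (by positivity)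
      _ = C * (n : ℝ) ^ N := by rw [hC, mul_pow, pow_succ]; ring
  have hfinal : C * (n : ℝ) ^ N < Real.exp ((h / 2) * n) := by
    have hthis := hn3
    rw [Real.exp_neg] at hthis
    have h1 : (n : ℝ) ^ N * (Real.exp ((h / 2) * n))⁻¹ * (C * Real.exp ((h / 2) * n)) <
        1 / C * (C * Real.exp ((h / 2) * n)) :=
      mul_lt_mul_of_pos_right hthis (by positivity)
    calc C * (n : ℝ) ^ N
        = (n : ℝ) ^ N * (Real.exp ((h / 2) * n))⁻¹ * (C * Real.exp ((h / 2) * n)) := by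
          field_simp
      _ < 1 / C * (C * Real.exp ((h / 2) * n)) := h1
      _ = Real.exp ((h / 2) * n) := by field_simp
  linarith

end Count
-- sieve section

lemma tele_sum (R : ℕ) (hR2 : 2 ≤ R) :
    ∑ m ∈ Finset.Icc 3 R, (1 : ℝ) / (m * m) ≤ 1 / 2 - 1 / R := by
  induction R, hR2 using Nat.le_induction with
  | base => simp
  | succ R hR ih =>
    rw [Finset.sum_Icc_succ_top (by omega)]
    have hih := ih
    have hRr : (2 : ℝ) ≤ R := by exact_mod_cast hR
    have h1 : (1 : ℝ) / ((R + 1) * (R + 1)) + 1 / (R + 1) ≤ 1 / R := by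
      rw [div_add_div _ _ (by positivity) (by positivity), div_le_div_iff₀ (by positivity) (by positivity)]
      ring_nf
      nlinarith
    have hcast : ((R : ℝ) + 1) = ((R + 1 : ℕ) : ℝ) := by push_cast; ring
    rw [← hcast]
    linarith

lemma prime_inv_sq_sum (R : ℕ) :
    ∑ p ∈ (Finset.range (R + 1)).filter Nat.Prime, (1 : ℝ) / (p * p) ≤ 3 / 4 := by
  classical
  have hsub : (Finset.range (R + 1)).filter Nat.Prime ⊆ insert 2 (Finset.Icc 3 R) := by
    intro p hp
    simp only [Finset.mem_filter, Finset.mem_range] at hp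
    obtain ⟨hpR, hpp⟩ := hp
    rcases Nat.lt_or_ge p 3 with h3 | h3
    · have : p = 2 := by
        have := hpp.two_le
        omega
      simp [this]
    · simp only [Finset.mem_insert, Finset.mem_Icc]
      right
      omega
  have h1 : ∑ p ∈ (Finset.range (R + 1)).filter Nat.Prime, (1 : ℝ) / (p * p) ≤
      ∑ p ∈ insert 2 (Finset.Icc 3 R), (1 : ℝ) / (p * p) := by
    apply Finset.sum_le_sum_of_subset_of_nonneg hsub
    intro i _ _
    positivity
  have h2 : ∑ p ∈ insert 2 (Finset.Icc 3 R), (1 : ℝ) / (p * p)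
      = 1 / 4 + ∑ m ∈ Finset.Icc 3 R, (1 : ℝ) / (m * m) := by
    rw [Finset.sum_insert (by simp)]
    norm_num
  rcases Nat.lt_or_ge R 3 with hR | hR
  · have : Finset.Icc 3 R = ∅ := by
      apply Finset.Icc_eq_empty
      omega
    rw [h2, this] at h1
    simpa using le_trans h1 (by norm_num)
  · have h3 := tele_sum R (by omega)
    have hRpos : (0 : ℝ) < R := by
      have : (3 : ℝ) ≤ R := by exact_mod_cast hR
      linarith
    have : (0 : ℝ) ≤ 1 / R := by positivity
    linarith [le_trans h1 (le_of_eq h2)]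

lemma ap_card_le (M D p : ℕ) (hp : Nat.Prime p) :
    ((Finset.range M).filter (fun k => p * p ∣ k * D + 1)).card ≤ M / (p * p) + 1 := by
  classical
  have hppos : 0 < p * p := by
    have := hp.two_le
    positivity
  apply le_trans (Finset.card_le_card_of_injOn (fun k => k / (p * p))
    (t := Finset.range (M / (p * p) + 1)) ?_ ?_) (by simp)
  · intro k hk
    simp only [Finset.coe_filter, Finset.mem_coe, Finset.mem_filter, Finset.mem_range, Set.mem_setOf_eq, Finset.coe_range, Set.mem_Iio] at hk ⊢
    exact lt_of_le_of_lt (Nat.div_le_div_right (le_of_lt hk.1)) (Nat.lt_succ_self _)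
  · intro k1 h1 k2 h2 heq
    simp only [Finset.coe_filter, Set.mem_setOf_eq, Finset.mem_range] at h1 h2
    have key : ∀ a b : ℕ, a ≤ b → p * p ∣ a * D + 1 → p * p ∣ b * D + 1 →
        a / (p * p) = b / (p * p) → a = b := by
      intro a b hab hda hdb hq
      have hsub : (b * D + 1) - (a * D + 1) = (b - a) * D := by
        rw [Nat.sub_mul]
        omega
      have hdvd : p * p ∣ (b - a) * D := by
        rw [← hsub]
        exact Nat.dvd_sub hdb hda
      have hpD : ¬ p ∣ D := by
        intro hdvd2
        have h3 : p ∣ a * D + 1 := dvd_trans (Dvd.intro p rfl) hda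
        have h4 : p ∣ a * D := Dvd.dvd.mul_left hdvd2 a
        have h5 : p ∣ 1 := by
          have : (a * D + 1) - (a * D) = 1 := by omega
          rw [← this]
          exact Nat.dvd_sub h3 h4
        have := Nat.le_of_dvd (by omega) h5
        have := hp.two_le
        omega
      have hcop : Nat.Coprime (p * p) D := by
        have hc := (Nat.Prime.coprime_iff_not_dvd hp).mpr hpD
        exact hc.mul hc
      obtain ⟨t, ht⟩ := hcop.dvd_of_dvd_mul_right hdvd
      have hb : b = a + (p * p) * t := by omega
      rcases Nat.eq_zero_or_pos t with ht0 | htpos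
      · subst ht0
        simp only [Nat.mul_zero, Nat.add_zero] at hb
        exact hb.symm
      · exfalso
        have hmul : p * p ≤ p * p * t := Nat.le_mul_of_pos_right _ htpos
        have hge : a + p * p ≤ b := by omega
        have h7 : (a + p * p) / (p * p) ≤ b / (p * p) := Nat.div_le_div_right hge
        rw [Nat.add_div_right _ hppos, ← hq] at h7
        exact Nat.not_succ_le_self _ h7
    have heq' : k1 / (p * p) = k2 / (p * p) := heq
    rcases le_total k1 k2 with hle | hle
    · exact key k1 k2 hle h1.2 h2.2 heq'
    · exact (key k2 k1 hle h2.2 h1.2 heq'.symm).symm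

lemma sieve (D : ℕ) (hD : 1 ≤ D) :
    ∀ᶠ M : ℕ in Filter.atTop,
      (M : ℝ) / 8 ≤ ((Finset.range M).filter (fun k => Squarefree (k * D + 1))).card := by
  classical
  filter_upwards [Filter.eventually_ge_atTop (256 * (D + 1))] with M hM
  have hM1 : 1 ≤ M := by nlinarith
  set R := Nat.sqrt (M * D + 1) with hR
  set P := (Finset.range (R + 1)).filter Nat.Prime with hP
  set Bad := (Finset.range M).filter (fun k => ¬ Squarefree (k * D + 1)) with hBad
  set Good := (Finset.range M).filter (fun k => Squarefree (k * D + 1)) with hGood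
  have hsub : Bad ⊆ P.biUnion (fun p => (Finset.range M).filter (fun k => p * p ∣ k * D + 1)) := by
    intro k hk
    simp only [hBad, Finset.mem_filter, Finset.mem_range] at hk
    obtain ⟨hkM, hknsf⟩ := hk
    have hex : ¬ ∀ x, Nat.Prime x → ¬ x * x ∣ k * D + 1 := fun hall =>
      hknsf (Nat.squarefree_iff_prime_squarefree.mpr hall)
    push_neg at hex
    obtain ⟨p, hpp, hpd⟩ := hex
    refine Finset.mem_biUnion.mpr ⟨p, ?_, ?_⟩
    · simp only [hP, Finset.mem_filter, Finset.mem_range]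
      refine ⟨?_, hpp⟩
      have h1 : p * p ≤ k * D + 1 := Nat.le_of_dvd (by omega) hpd
      have h2 : k * D ≤ M * D := Nat.mul_le_mul_right D (le_of_lt hkM)
      have h3 : p ≤ R := Nat.le_sqrt.mpr (by omega)
      omega
    · simp only [Finset.mem_filter, Finset.mem_range]
      exact ⟨hkM, hpd⟩
  have hcard1 : Bad.card ≤ ∑ p ∈ P, (M / (p * p) + 1) := by
    refine le_trans (le_trans (Finset.card_le_card hsub) Finset.card_biUnion_le) ?_
    apply Finset.sum_le_sum
    intro p hp
    simp only [hP, Finset.mem_filter] at hp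
    exact ap_card_le M D p hp.2
  -- real estimates
  have hBadR : (Bad.card : ℝ) ≤ (3 / 4) * M + (R + 1) := by
    have h1 : (Bad.card : ℝ) ≤ ∑ p ∈ P, ((M : ℝ) / (p * p) + 1) := by
      calc (Bad.card : ℝ) ≤ ((∑ p ∈ P, (M / (p * p) + 1) : ℕ) : ℝ) := by exact_mod_cast hcard1
        _ = ∑ p ∈ P, ((M / (p * p) + 1 : ℕ) : ℝ) := by push_cast; rfl
        _ ≤ ∑ p ∈ P, ((M : ℝ) / (p * p) + 1) := by
            apply Finset.sum_le_sum
            intro p _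
            push_cast
            have := Nat.cast_div_le (α := ℝ) (m := M) (n := p * p)
            push_cast at this
            linarith
    have h2 : ∑ p ∈ P, ((M : ℝ) / (p * p) + 1) = (M : ℝ) * (∑ p ∈ P, (1 : ℝ) / (p * p)) + P.card := by
      rw [Finset.sum_add_distrib, Finset.mul_sum]
      simp only [Finset.sum_const, nsmul_eq_mul, mul_one]
      congr 1
      apply Finset.sum_congr rfl
      intro p _
      field_simp
    have h3 : ∑ p ∈ P, (1 : ℝ) / (p * p) ≤ 3 / 4 := prime_inv_sq_sum R
    have h4 : (P.card : ℝ) ≤ R + 1 := by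
      have : P.card ≤ R + 1 := le_trans (Finset.card_filter_le _ _) (by simp)
      exact_mod_cast this
    have hMnn : (0 : ℝ) ≤ M := Nat.cast_nonneg M
    calc (Bad.card : ℝ) ≤ (M : ℝ) * (∑ p ∈ P, (1 : ℝ) / (p * p)) + P.card := by
          rw [← h2]; exact h1
      _ ≤ (M : ℝ) * (3 / 4) + (R + 1) := by
          apply add_le_add _ h4
          exact mul_le_mul_of_nonneg_left h3 hMnn
      _ = (3 / 4) * M + (R + 1) := by ring
  -- sqrt bound
  have hRM : (R : ℝ) + 1 ≤ (M : ℝ) / 8 := by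
    have hRsq : (R : ℝ) * R ≤ (M : ℝ) * D + 1 := by
      have := Nat.sqrt_le' (M * D + 1)
      rw [pow_two] at this
      have h2 : ((R * R : ℕ) : ℝ) ≤ ((M * D + 1 : ℕ) : ℝ) := by exact_mod_cast this
      push_cast at h2
      linarith
    have hMr : (256 : ℝ) * ((D : ℝ) + 1) ≤ M := by exact_mod_cast hM
    have hDr : (1 : ℝ) ≤ D := by exact_mod_cast hD
    have hMD : (M : ℝ) * D + 1 ≤ (M : ℝ) * M / 256 := by nlinarith
    have hRle : (R : ℝ) ≤ (M : ℝ) / 16 := by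
      by_contra hcon
      push_neg at hcon
      have hMnn : (0 : ℝ) ≤ (M : ℝ) / 16 := by positivity
      have : ((M : ℝ) / 16) * ((M : ℝ) / 16) < (R : ℝ) * R :=
        mul_self_lt_mul_self hMnn hcon
      nlinarith
    nlinarith
  -- combine
  have hpart : Good.card + Bad.card = M := by
    have := Finset.card_filter_add_card_filter_not
      (s := Finset.range M) (fun k => Squarefree (k * D + 1))
    simpa [hGood, hBad] using this
  have hGoodR : (M : ℝ) - (Bad.card : ℝ) ≤ Good.card := by
    have h1 : (Good.card : ℝ) + Bad.card = M := by exact_mod_cast hpart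
    linarith
  linarith

lemma cycle_data {V : Type*} (A : V → V → Prop) (p : V) (c1 c2 : List V)
    (h1 : FirstRet A p c1) (h2 : FirstRet A p c2) (hne : c1 ≠ c2) :
    ∃ (cy : Bool → ℕ → V) (len : Bool → ℕ),
      (∀ b, 1 ≤ len b) ∧ (∀ b, cy b 0 = p) ∧
      (∀ b i, 0 < i → i < len b → cy b i ≠ p) ∧
      (¬(len false = len true ∧ ∀ i < len false, cy false i = cy true i)) ∧
      (∀ b i, i + 1 < len b → A (cy b i) (cy b (i + 1))) ∧
      (∀ b, A (cy b (len b - 1)) p) := by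
  classical
  have H : ∀ b : Bool, FirstRet A p (cond b c2 c1) := by
    intro b; cases b
    · exact h1
    · exact h2
  have hlen2 : ∀ b : Bool, 2 ≤ (cond b c2 c1).length := fun b => (H b).2.1
  have hhead : ∀ b : Bool, (cond b c2 c1)[0]? = some p := by
    intro b
    rw [← List.head?_eq_getElem?]
    exact (H b).2.2.1
  have hlast : ∀ b : Bool, (cond b c2 c1)[(cond b c2 c1).length - 1]? = some p := by
    intro b
    rw [← List.getLast?_eq_getElem?]
    exact (H b).2.2.2.1
  have hlastv : ∀ b : Bool, (cond b c2 c1).getD ((cond b c2 c1).length - 1) p = p := by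
    intro b
    rw [List.getD_eq_getElem?_getD, hlast b]
    rfl
  refine ⟨fun b i => (cond b c2 c1).getD i p, fun b => (cond b c2 c1).length - 1,
    ?_, ?_, ?_, ?_, ?_, ?_⟩
  · intro b
    show 1 ≤ (cond b c2 c1).length - 1
    have := hlen2 b; omega
  · intro b
    show (cond b c2 c1).getD 0 p = p
    rw [List.getD_eq_getElem?_getD, hhead b]
    rfl
  · intro b i hi0 hilen
    have hilen' : i < (cond b c2 c1).length - 1 := hilen
    show (cond b c2 c1).getD i p ≠ p
    have hlt : i < (cond b c2 c1).length := by have := hlen2 b; omega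
    rw [List.getD_eq_getElem _ _ hlt]
    intro hcon
    exact (H b).2.2.2.2 i hi0 hilen' (List.getElem?_eq_some_iff.mpr ⟨hlt, hcon⟩)
  · rintro ⟨hleq, hall⟩
    have hleq' : c1.length - 1 = c2.length - 1 := hleq
    have hall' : ∀ i < c1.length - 1, c1.getD i p = c2.getD i p := hall
    apply hne
    have hlf := hlen2 false
    have hlt' := hlen2 true
    simp only [Bool.cond_false, Bool.cond_true] at hlf hlt'
    have hl12 : c1.length = c2.length := by omega
    apply List.ext_getElem hl12
    intro i hi1 hi2
    rcases Nat.lt_or_ge i (c1.length - 1) with hi | hi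
    · have hgd := hall' i hi
      rwa [List.getD_eq_getElem _ _ hi1, List.getD_eq_getElem _ _ hi2] at hgd
    · have hieq : i = c1.length - 1 := by omega
      subst hieq
      have e1 := hlastv false
      have e2 := hlastv true
      simp only [Bool.cond_false, Bool.cond_true] at e1 e2
      rw [List.getD_eq_getElem _ _ (by omega : c1.length - 1 < c1.length)] at e1
      rw [List.getD_eq_getElem _ _ (by omega : c2.length - 1 < c2.length)] at e2
      have e2' : c2[c1.length - 1]'hi2 = p := by
        convert e2 using 2
      rw [e1, e2']
  · intro b i hi
    have hi' : i + 1 < (cond b c2 c1).length - 1 := hi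
    show A ((cond b c2 c1).getD i p) ((cond b c2 c1).getD (i + 1) p)
    have hch := (H b).1
    replace hch := List.isChain_iff_getElem.mp hch
    have hlt1 : i < (cond b c2 c1).length := by omega
    have hlt2 : i + 1 < (cond b c2 c1).length := by omega
    have hstep := hch i (by omega)
    rw [List.getD_eq_getElem _ _ hlt1, List.getD_eq_getElem _ _ hlt2]
    simpa [List.get_eq_getElem] using hstep
  · intro b
    show A ((cond b c2 c1).getD ((cond b c2 c1).length - 1 - 1) p) p
    have hch := (H b).1
    replace hch := List.isChain_iff_getElem.mp hch
    have hl := hlen2 b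
    have hstep := hch ((cond b c2 c1).length - 2) (by omega)
    have hgl := hlastv b
    rw [List.getD_eq_getElem _ _ (by omega : (cond b c2 c1).length - 1 < (cond b c2 c1).length)] at hgl
    rw [List.getD_eq_getElem _ _
      (by omega : (cond b c2 c1).length - 1 - 1 < (cond b c2 c1).length)]
    have hkey : A ((cond b c2 c1)[(cond b c2 c1).length - 2]'(by omega))
        ((cond b c2 c1)[(cond b c2 c1).length - 1]'(by omega)) := by
      convert hstep using 2
      omega
    rw [hgl] at hkey
    have hidx : (cond b c2 c1).length - 1 - 1 = (cond b c2 c1).length - 2 := by omega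
    convert hkey using 2

end SPE

/-- Main theorem: a one-sided subshift of finite type with positive topological
entropy is not Möbius orthogonal: there are a point `z` of the subshift and a
continuous test function `φ` whose Möbius correlations do not tend to `0`. -/
theorem sft_positive_entropy_not_moebius_orthogonal
    {V : Type*} [Fintype V] [TopologicalSpace V] [DiscreteTopology V]
    (A : V → V → Prop) (hpos : 0 < sftEntropy V A) :
    ∃ z : ℕ → V, (∀ n : ℕ, A (z n) (z (n + 1))) ∧
      ∃ φ : (ℕ → V) → ℝ, Continuous φ ∧
        0 < Filter.limsup
          (fun N : ℕ => (1 / N : ℝ) *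
            ∑ n ∈ Finset.Icc 1 N, (moebius n : ℝ) * φ (fun i => z (n + i)))
          Filter.atTop := by
  classical
  obtain ⟨p, c1, c2, hfr1, hfr2, hnecc⟩ := SPE.extraction A hpos
  obtain ⟨cy, len, hlen, hcy0, hint, hdist, hchain, hclose⟩ :=
    SPE.cycle_data A p c1 c2 hfr1 hfr2 hnecc
  set D := SPE.Dlen len with hD
  have hD1 : 1 ≤ D := SPE.Dlen_pos len hlen
  have hD2 : 2 ≤ D := by
    have hf := hlen false; have ht := hlen true
    rw [hD]; unfold SPE.Dlen; omega
  set s : ℕ → Bool := fun k => decide ((moebius (k * D + 1) : ℤ) < 0) with hs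
  set z : ℕ → V := SPE.Z cy len s with hz
  refine ⟨z, fun n => SPE.Z_adm cy len s hlen p hcy0 A hchain hclose n, ?_⟩
  set φ : (ℕ → V) → ℝ := fun x =>
    if ∀ o, o < D → x o = SPE.blockLetter cy len false o then 1
    else if ∀ o, o < D → x o = SPE.blockLetter cy len true o then -1 else 0 with hφ
  refine ⟨φ, ?_, ?_⟩
  · -- continuity
    have hfact : φ = (fun y : Fin D → V =>
        if ∀ o : Fin D, y o = SPE.blockLetter cy len false o then (1 : ℝ)
        else if ∀ o : Fin D, y o = SPE.blockLetter cy len true o then -1 else 0) ∘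
        (fun x (i : Fin D) => x i) := by
      funext x
      have e1 : (∀ o, o < D → x o = SPE.blockLetter cy len false o) ↔
          (∀ o : Fin D, x o = SPE.blockLetter cy len false o) :=
        ⟨fun h o => h o o.2, fun h o ho => h ⟨o, ho⟩⟩
      have e2 : (∀ o, o < D → x o = SPE.blockLetter cy len true o) ↔
          (∀ o : Fin D, x o = SPE.blockLetter cy len true o) :=
        ⟨fun h o => h o o.2, fun h o ho => h ⟨o, ho⟩⟩
      simp only [hφ, Function.comp_apply, e1, e2]
    rw [hfact]
    exact Continuous.comp continuous_of_discreteTopology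
      (continuous_pi fun i => continuous_apply (i : ℕ))
  -- the correlation estimate
  have hkinj : ∀ k k' : ℕ, 1 + k * D = 1 + k' * D → k = k' := by
    intro k k' h
    have h2 : k * D = k' * D := by omega
    exact Nat.eq_of_mul_eq_mul_right (by omega) h2
  have hocc : ∀ {n : ℕ} {b : Bool}, 1 ≤ n →
      (∀ o, o < D → z (n + o) = SPE.blockLetter cy len b o) →
      ∃ k, n = 1 + k * D ∧ s k = b := by
    intro n b hn hm
    exact SPE.occurrence cy len s hlen p hcy0 hint hdist hn (fun o ho => hm o ho)
  have hval_aligned : ∀ k n, n = k * D + 1 →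
      φ (fun i => z (n + i)) = if s k = false then 1 else -1 := by
    intro k n hn
    have hAL : ∀ o, o < D → z (n + o) = SPE.blockLetter cy len (s k) o := by
      intro o ho
      rw [show n + o = 1 + k * D + o by omega]
      exact SPE.Z_aligned cy len s hlen k ho
    cases hsk : s k with
    | false =>
      have hcond : ∀ o, o < D → (fun i => z (n + i)) o = SPE.blockLetter cy len false o := by
        intro o ho
        have := hAL o ho
        rwa [hsk] at this
      simp only [hφ]
      rw [if_pos hcond]
      simp
    | true =>
      have hcond : ∀ o, o < D → (fun i => z (n + i)) o = SPE.blockLetter cy len true o := by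
        intro o ho
        have := hAL o ho
        rwa [hsk] at this
      have hncond : ¬ ∀ o, o < D → (fun i => z (n + i)) o = SPE.blockLetter cy len false o := by
        intro hcon
        obtain ⟨k', hk', hsk'⟩ := hocc (n := n) (b := false) (by omega) hcon
        have hkk : k = k' := hkinj k k' (by omega)
        rw [← hkk, hsk] at hsk'
        simp at hsk'
      simp only [hφ]
      rw [if_neg hncond, if_pos hcond]
      simp
  have hval_mis : ∀ n, 1 ≤ n → (¬ ∃ k, n = 1 + k * D) → φ (fun i => z (n + i)) = 0 := by
    intro n hn hno
    have hnf : ¬ ∀ o, o < D → (fun i => z (n + i)) o = SPE.blockLetter cy len false o := by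
      intro hcon
      obtain ⟨k, hk, -⟩ := hocc (n := n) (b := false) hn hcon
      exact hno ⟨k, hk⟩
    have hnt : ¬ ∀ o, o < D → (fun i => z (n + i)) o = SPE.blockLetter cy len true o := by
      intro hcon
      obtain ⟨k, hk, -⟩ := hocc (n := n) (b := true) hn hcon
      exact hno ⟨k, hk⟩
    simp only [hφ]
    rw [if_neg hnf, if_neg hnt]
  set g : ℕ → ℝ := fun n => (moebius n : ℝ) * φ (fun i => z (n + i)) with hg
  have hg_aligned : ∀ k, g (k * D + 1) = |(moebius (k * D + 1) : ℝ)| := by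
    intro k
    have hv := hval_aligned k (k * D + 1) rfl
    simp only [hg]
    rw [hv]
    rcases lt_or_ge (moebius (k * D + 1) : ℤ) 0 with hμ | hμ
    · have hskt : s k = true := by simp [hs, hμ]
      rw [hskt]
      have hc : ((moebius (k * D + 1) : ℤ) : ℝ) < 0 := by exact_mod_cast hμ
      rw [abs_of_neg hc]
      simp
    · have hskf : s k = false := by simp [hs]; omega
      rw [hskf]
      have hc : (0 : ℝ) ≤ ((moebius (k * D + 1) : ℤ) : ℝ) := by exact_mod_cast hμ
      rw [abs_of_nonneg hc]
      simp
  have hmod_iff : ∀ n : ℕ, ((∃ k, n = 1 + k * D) ↔ n % D = 1) := by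
    intro n
    constructor
    · rintro ⟨k, rfl⟩
      have h1 : (1 + k * D) % D = 1 % D := Nat.add_mul_mod_self_right 1 k D
      rw [h1, Nat.mod_eq_of_lt (by omega)]
    · intro hmod
      have hdm := Nat.div_add_mod n D
      rw [hmod] at hdm
      refine ⟨n / D, ?_⟩
      calc n = D * (n / D) + 1 := hdm.symm
        _ = 1 + n / D * D := by ring
  have hg_mis : ∀ n, 1 ≤ n → n % D ≠ 1 → g n = 0 := by
    intro n hn hmod
    have hφ0 := hval_mis n hn (fun hex => hmod ((hmod_iff n).mp hex))
    simp only [hg]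
    rw [hφ0, mul_zero]
  have hg_sf : ∀ k, Squarefree (k * D + 1) → 1 ≤ g (k * D + 1) := by
    intro k hsf
    rw [hg_aligned k]
    have hne0 : moebius (k * D + 1) ≠ 0 :=
      ArithmeticFunction.moebius_ne_zero_iff_squarefree.mpr hsf
    have h1 : 1 ≤ |moebius (k * D + 1)| := Int.one_le_abs (by exact_mod_cast hne0)
    have h2 : ((1 : ℤ) : ℝ) ≤ ((|moebius (k * D + 1)| : ℤ) : ℝ) := by exact_mod_cast h1
    rw [Int.cast_abs] at h2
    simpa using h2
  have hg_nn : ∀ k, 0 ≤ g (k * D + 1) := by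
    intro k
    rw [hg_aligned k]
    positivity
  have habs_le : ∀ n, g n ≤ 1 := by
    intro n
    have h1 : |(moebius n : ℝ)| ≤ 1 := by
      by_cases hsf : Squarefree n
      · rw [ArithmeticFunction.moebius_apply_of_squarefree hsf]
        push_cast
        rw [abs_pow]
        simp
      · rw [ArithmeticFunction.moebius_eq_zero_of_not_squarefree hsf]
        simp
    have h2 : |φ (fun i => z (n + i))| ≤ 1 := by
      simp only [hφ]
      split_ifs <;> simp
    calc g n ≤ |g n| := le_abs_self _
      _ = |(moebius n : ℝ)| * |φ (fun i => z (n + i))| := by rw [hg]; exact abs_mul _ _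
      _ ≤ 1 * 1 := mul_le_mul h1 h2 (abs_nonneg _) (by norm_num)
      _ = 1 := by norm_num
  have hsum : ∀ N, 1 ≤ N → ∑ n ∈ Finset.Icc 1 N, g n
      = ∑ k ∈ Finset.range ((N - 1) / D + 1), g (k * D + 1) := by
    intro N hN
    have hfil : ∑ n ∈ (Finset.Icc 1 N).filter (fun n => n % D = 1), g n
        = ∑ n ∈ Finset.Icc 1 N, g n := by
      apply Finset.sum_filter_of_ne
      intro x hx hgx
      by_contra hmod
      simp only [Finset.mem_Icc] at hx
      exact hgx (hg_mis x (by omega) hmod)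
    rw [← hfil]
    have himg : (Finset.Icc 1 N).filter (fun n => n % D = 1)
        = (Finset.range ((N - 1) / D + 1)).image (fun k => k * D + 1) := by
      ext n
      simp only [Finset.mem_filter, Finset.mem_Icc, Finset.mem_image, Finset.mem_range]
      constructor
      · rintro ⟨⟨hn1, hn2⟩, hmod⟩
        obtain ⟨k, hk⟩ := (hmod_iff n).mpr hmod
        refine ⟨k, ?_, by omega⟩
        have hkD : k * D ≤ N - 1 := by omega
        have := (Nat.le_div_iff_mul_le (by omega : 0 < D)).mpr hkD
        omega
      · rintro ⟨k, hk, rfl⟩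
        have h5 : k ≤ (N - 1) / D := by omega
        have h6 := (Nat.le_div_iff_mul_le (by omega : 0 < D)).mp h5
        exact ⟨⟨by omega, by omega⟩, (hmod_iff _).mp ⟨k, by omega⟩⟩
    rw [himg, Finset.sum_image]
    intro k1 _ k2 _ he
    have h7 : k1 * D = k2 * D := by simp only at he; omega
    exact Nat.eq_of_mul_eq_mul_right (by omega) h7
  obtain ⟨M0, hM0⟩ := Filter.eventually_atTop.mp (SPE.sieve D (by omega))
  set c : ℝ := 1 / (8 * D) with hc
  have hcpos : 0 < c := by
    rw [hc]
    have : (0 : ℝ) < D := by exact_mod_cast hD1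
    positivity
  have hlow : ∀ N, D * M0 + D ≤ N →
      c ≤ (1 / N : ℝ) * ∑ n ∈ Finset.Icc 1 N, g n := by
    intro N hNb
    have hDM0 : 1 ≤ D * M0 + D := by
      have : D ≤ D * M0 + D := Nat.le_add_left D _
      omega
    have hN1 : 1 ≤ N := le_trans hDM0 hNb
    set M := (N - 1) / D + 1 with hM
    have hMge : M0 ≤ M := by
      have hmul : M0 * D ≤ N - 1 := by
        have h9 : M0 * D = D * M0 := Nat.mul_comm _ _
        omega
      have := (Nat.le_div_iff_mul_le (by omega : 0 < D)).mpr hmul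
      omega
    have hsieve := hM0 M hMge
    have hDMnat : N ≤ D * M := by
      have hqr := Nat.div_add_mod (N - 1) D
      have hmlt : (N - 1) % D < D := Nat.mod_lt _ (by omega)
      have hMe : D * M = D * ((N - 1) / D) + D := by rw [hM, Nat.mul_add, Nat.mul_one]
      omega
    have hDM : (N : ℝ) ≤ (D : ℝ) * M := by exact_mod_cast hDMnat
    have hsum1 : (M : ℝ) / 8 ≤ ∑ k ∈ Finset.range M, g (k * D + 1) := by
      calc (M : ℝ) / 8
          ≤ (((Finset.range M).filter (fun k => Squarefree (k * D + 1))).card : ℝ) := hsieve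
        _ = ∑ k ∈ Finset.range M, (if Squarefree (k * D + 1) then (1 : ℝ) else 0) := by
            rw [Finset.sum_boole]
        _ ≤ ∑ k ∈ Finset.range M, g (k * D + 1) := by
            apply Finset.sum_le_sum
            intro k _
            by_cases hsf : Squarefree (k * D + 1)
            · rw [if_pos hsf]; exact hg_sf k hsf
            · rw [if_neg hsf]; exact hg_nn k
    have hS : ∑ n ∈ Finset.Icc 1 N, g n = ∑ k ∈ Finset.range M, g (k * D + 1) := hsum N hN1
    rw [hS]
    have hNpos : (0 : ℝ) < N := by exact_mod_cast hN1
    have hDpos : (0 : ℝ) < D := by exact_mod_cast hD1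
    have hfin : (N : ℝ) / (8 * D) ≤ ∑ k ∈ Finset.range M, g (k * D + 1) := by
      calc (N : ℝ) / (8 * D) ≤ ((D : ℝ) * M) / (8 * D) := by gcongr
        _ = (M : ℝ) / 8 := by field_simp
        _ ≤ _ := hsum1
    calc c = (1 / (N : ℝ)) * ((N : ℝ) / (8 * D)) := by
          rw [hc]; field_simp
      _ ≤ (1 / (N : ℝ)) * ∑ k ∈ Finset.range M, g (k * D + 1) := by
          apply mul_le_mul_of_nonneg_left hfin (by positivity)
  have hub : ∀ N : ℕ, (1 / N : ℝ) * ∑ n ∈ Finset.Icc 1 N, g n ≤ 1 := by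
    intro N
    rcases Nat.eq_zero_or_pos N with h0 | hNp
    · simp [h0]
    · have hNpos : (0 : ℝ) < N := by exact_mod_cast hNp
      have hsb : ∑ n ∈ Finset.Icc 1 N, g n ≤ N := by
        calc ∑ n ∈ Finset.Icc 1 N, g n ≤ ∑ n ∈ Finset.Icc 1 N, (1 : ℝ) :=
            Finset.sum_le_sum (fun n _ => habs_le n)
          _ = ((Finset.Icc 1 N).card : ℝ) := by simp
          _ = N := by rw [Nat.card_Icc]; simp
      calc (1 / N : ℝ) * ∑ n ∈ Finset.Icc 1 N, g n ≤ (1 / N : ℝ) * N :=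
          mul_le_mul_of_nonneg_left hsb (by positivity)
        _ = 1 := by field_simp
  have hbdd : Filter.IsBoundedUnder (· ≤ ·) Filter.atTop
      (fun N : ℕ => (1 / N : ℝ) * ∑ n ∈ Finset.Icc 1 N, g n) :=
    Filter.isBoundedUnder_of ⟨1, fun N => hub N⟩
  have hfreq : ∃ᶠ N : ℕ in Filter.atTop,
      c ≤ (1 / N : ℝ) * ∑ n ∈ Finset.Icc 1 N, g n :=
    (Filter.eventually_atTop.mpr ⟨D * M0 + D, hlow⟩).frequently
  have hle := Filter.le_limsup_of_frequently_le hfreq hbdd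
  exact lt_of_lt_of_le hcpos hle
end

section
/- Let γ'_1 and γ'_2 be two distinct finite words over alphabet V, each beginning with a symbol v that occurs nowhere else in either word, with v occurring exactly once in each. Then the words x = γ'_1 γ'_1 γ'_2 γ'_2 γ'_1 and y = γ'_1 γ'_2 γ'_1 γ'_2 γ'_1 are distinct, have equal length l = 3|γ'_1| + 2|γ'_2|, and have the recognizability property: in any concatenation of two words from {x, y}, the only occurrences of x or y as factors are at positions 0 and l. -/
namespace MarkerAux

variable {V : Type*} [DecidableEq V]

lemma head_decomp {v : V} {γ : List V} (h : γ.head? = some v) :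
    ∃ t, γ = v :: t := by
  cases γ with
  | nil => simp at h
  | cons a t => simp at h; exact ⟨t, by rw [h]⟩

lemma tail_count {v : V} {γ : List V} (h : γ.head? = some v) (hc : γ.count v = 1) :
    ∀ c ∈ γ.tail, c ≠ v := by
  obtain ⟨t, rfl⟩ := head_decomp h
  simp [List.count_cons] at hc
  intro c hct heq
  subst heq
  exact (List.count_eq_zero.mp hc) hct

lemma head_append {v : V} {u X : List V} (h : u.head? = some v) :
    (u ++ X).head? = some v := by
  rw [List.head?_append, h]; rfl

lemma match_blk {v : V} {w₀ b₀ A B : List V}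
    (hw : w₀.head? = some v) (hcw : w₀.count v = 1)
    (hb : b₀.head? = some v) (hcb : b₀.count v = 1)
    (hA : A.head? = some v) (hB : B.head? = some v)
    (hpre : w₀ ++ A <+: b₀ ++ B) : w₀ = b₀ := by
  obtain ⟨t, ht⟩ := hpre
  rw [List.append_assoc] at ht
  rcases List.append_eq_append_iff.mp ht with ⟨r, hr1, hr2⟩ | ⟨r, hr1, hr2⟩
  · cases r with
    | nil => simpa using hr1.symm
    | cons c cs =>
      exfalso
      have hcv : c = v := by
        have : ((c :: cs) ++ B).head? = some v := by rw [← hr2, List.head?_append, hA]; rfl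
        simpa using this
      obtain ⟨tw, rfl⟩ := head_decomp hw
      refine tail_count hb hcb c ?_ hcv
      rw [hr1]
      simp
  · cases r with
    | nil => simpa using hr1
    | cons c cs =>
      exfalso
      have hcv : c = v := by
        have : ((c :: cs) ++ (A ++ t)).head? = some v := by rw [← hr2]; exact hB
        simpa using this
      obtain ⟨tb, rfl⟩ := head_decomp hb
      refine tail_count hw hcw c ?_ hcv
      rw [hr1]
      simp

lemma split_blocks {v : V} :
    ∀ (bs : List (List V)),
      (∀ b ∈ bs, b.head? = some v ∧ b.count v = 1) →
      ∀ i : ℕ, ((bs.flatten).drop i).head? = some v →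
      ∃ k, k ≤ bs.length ∧ i = ((bs.take k).flatten).length := by
  intro bs
  induction bs with
  | nil => intro _ i hi; simp at hi
  | cons b rest ih =>
    intro hb i hi
    by_cases hib : i < b.length
    · rcases Nat.eq_zero_or_pos i with rfl | hpos
      · exact ⟨0, by simp, by simp⟩
      · exfalso
        have hbp := hb b (by simp)
        rw [List.flatten_cons, List.drop_append] at hi
        have hne : b.drop i ≠ [] := by
          intro hh
          rw [List.drop_eq_nil_iff] at hh
          omega
        rw [List.head?_append] at hi
        obtain ⟨c, hc⟩ := List.exists_mem_of_ne_nil _ hne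
        have hh : (b.drop i).head? = some v := by
          cases hhd : (b.drop i).head? with
          | none => exact absurd (List.head?_eq_none_iff.mp hhd) hne
          | some c => rw [hhd] at hi; simpa using hi
        rw [List.head?_drop] at hh
        have hmem : v ∈ b.tail := by
          obtain ⟨t, rfl⟩ := head_decomp hbp.1
          obtain ⟨j, rfl⟩ : ∃ j, i = j + 1 := ⟨i - 1, by omega⟩
          have : (v :: t)[j+1]? = t[j]? := by simp
          rw [this] at hh
          simpa using List.mem_of_getElem? hh
        exact tail_count hbp.1 hbp.2 v hmem rfl
    · push_neg at hib
      rw [List.flatten_cons, List.drop_append,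
        List.drop_eq_nil_iff.mpr hib, List.nil_append] at hi
      obtain ⟨k, hk, hik⟩ := ih (fun b hb' => hb b (by simp [hb'])) _ hi
      refine ⟨k + 1, by simpa using hk, ?_⟩
      simp only [List.take_succ_cons, List.flatten_cons, List.length_append]
      omega

lemma match4 {v : V} {γ₁ γ₂ : List V}
    (h₁ : γ₁.head? = some v) (h₂ : γ₂.head? = some v)
    (hc₁ : γ₁.count v = 1) (hc₂ : γ₂.count v = 1)
    {d0 d1 d2 d3 d4 b0 b1 b2 b3 b4 rest : List V}
    (H : ∀ u ∈ [d0,d1,d2,d3,d4,b0,b1,b2,b3,b4], u = γ₁ ∨ u = γ₂)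
    (h : d0 ++ (d1 ++ (d2 ++ (d3 ++ d4))) <+: b0 ++ (b1 ++ (b2 ++ (b3 ++ (b4 ++ rest))))) :
    d0 = b0 ∧ d1 = b1 ∧ d2 = b2 ∧ d3 = b3 := by
  have hp : ∀ u, (u = γ₁ ∨ u = γ₂) → u.head? = some v ∧ u.count v = 1 := by
    rintro u (rfl | rfl)
    exacts [⟨h₁, hc₁⟩, ⟨h₂, hc₂⟩]
  have pd0 := hp d0 (H _ (by simp)); have pd1 := hp d1 (H _ (by simp))
  have pd2 := hp d2 (H _ (by simp)); have pd3 := hp d3 (H _ (by simp))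
  have pd4 := hp d4 (H _ (by simp)); have pb0 := hp b0 (H _ (by simp))
  have pb1 := hp b1 (H _ (by simp)); have pb2 := hp b2 (H _ (by simp))
  have pb3 := hp b3 (H _ (by simp)); have pb4 := hp b4 (H _ (by simp))
  have e0 : d0 = b0 :=
    match_blk pd0.1 pd0.2 pb0.1 pb0.2 (head_append pd1.1) (head_append pb1.1) h
  rw [e0, List.prefix_append_right_inj] at h
  have e1 : d1 = b1 :=
    match_blk pd1.1 pd1.2 pb1.1 pb1.2 (head_append pd2.1) (head_append pb2.1) h
  rw [e1, List.prefix_append_right_inj] at h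
  have e2 : d2 = b2 :=
    match_blk pd2.1 pd2.2 pb2.1 pb2.2 (head_append pd3.1) (head_append pb3.1) h
  rw [e2, List.prefix_append_right_inj] at h
  have e3 : d3 = b3 :=
    match_blk pd3.1 pd3.2 pb3.1 pb3.2 pd4.1 (head_append pb4.1) h
  exact ⟨e0, e1, e2, e3⟩

end MarkerAux

namespace MarkerAux

set_option maxHeartbeats 2000000 in
lemma recog_aux {V : Type*} [DecidableEq V] {v : V} {γ₁ γ₂ : List V}
    (h₁ : γ₁.head? = some v) (h₂ : γ₂.head? = some v)
    (hc₁ : γ₁.count v = 1) (hc₂ : γ₂.count v = 1) (hne : γ₁ ≠ γ₂)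
    (A B wb : List (List V))
    (hA : A = [γ₁,γ₁,γ₂,γ₂,γ₁] ∨ A = [γ₁,γ₂,γ₁,γ₂,γ₁])
    (hB : B = [γ₁,γ₁,γ₂,γ₂,γ₁] ∨ B = [γ₁,γ₂,γ₁,γ₂,γ₁])
    (hW : wb = [γ₁,γ₁,γ₂,γ₂,γ₁] ∨ wb = [γ₁,γ₂,γ₁,γ₂,γ₁])
    (i : ℕ)
    (hi : i + (3 * γ₁.length + 2 * γ₂.length) ≤ 2 * (3 * γ₁.length + 2 * γ₂.length))
    (hw : (((A ++ B).flatten).drop i).take (3 * γ₁.length + 2 * γ₂.length) = wb.flatten) :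
    i = 0 ∨ i = 3 * γ₁.length + 2 * γ₂.length := by
  have ha : 0 < γ₁.length := by
    obtain ⟨t, rfl⟩ := head_decomp h₁; simp
  have hbl : 0 < γ₂.length := by
    obtain ⟨t, rfl⟩ := head_decomp h₂; simp
  have hcs : ∀ c ∈ A ++ B, c.head? = some v ∧ c.count v = 1 := by
    intro c hc
    have hc' : c = γ₁ ∨ c = γ₂ := by
      rcases hA with rfl | rfl <;> rcases hB with rfl | rfl <;> simp at hc <;> tauto
    rcases hc' with rfl | rfl <;> exact ⟨‹_›, ‹_›⟩
  have hwh : wb.flatten.head? = some v := by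
    rcases hW with rfl | rfl <;> rw [List.flatten_cons] <;> exact head_append h₁
  have hpre0 : wb.flatten <+: ((A ++ B).flatten).drop i := hw ▸ List.take_prefix _ _
  have hhead : (((A ++ B).flatten).drop i).head? = some v := by
    obtain ⟨t, ht⟩ := hpre0
    rw [← ht, List.head?_append, hwh]; rfl
  obtain ⟨k, hk, hik⟩ := split_blocks (A ++ B) hcs i hhead
  have hd : ((A ++ B).flatten).drop i = (((A ++ B).drop k).flatten) := by
    calc ((A ++ B).flatten).drop i
        = ((List.take k (A ++ B)).flatten ++ (List.drop k (A ++ B)).flatten).drop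
            ((List.take k (A ++ B)).flatten).length := by
          rw [← List.flatten_append, List.take_append_drop, ← hik]
      _ = ((A ++ B).drop k).flatten := List.drop_left
  rw [hd] at hpre0
  rcases hA with rfl | rfl <;> rcases hB with rfl | rfl <;> rcases hW with rfl | rfl <;>
    simp only [List.length_append, List.length_cons, List.length_nil] at hk <;>
    interval_cases k <;>
    simp only [List.take, List.drop, List.flatten_cons, List.flatten_nil,
      List.append_nil, List.nil_append, List.length_append, List.length_nil,
      List.cons_append, List.append_assoc] at hik hpre0 <;>
    first
      | omega
      | (exfalso
         rcases match4 h₁ h₂ hc₁ hc₂ (by intro u hu; simp at hu; tauto) hpre0 with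
           ⟨e0, e1, e2, e3⟩
         first
           | exact hne e0 | exact hne e0.symm | exact hne e1 | exact hne e1.symm
           | exact hne e2 | exact hne e2.symm | exact hne e3 | exact hne e3.symm)

end MarkerAux

open MarkerAux in
/-- Lemma 2 construction: if `γ₁` and `γ₂` are distinct words each beginning with a
marker symbol `v` occurring exactly once in each, then `x = γ₁γ₁γ₂γ₂γ₁` and
`y = γ₁γ₂γ₁γ₂γ₁` are distinct words of common length `l = 3|γ₁| + 2|γ₂|` with the
recognizability property. -/
theorem marker_words_recognizable
    {V : Type*} [DecidableEq V] (v : V) (γ₁ γ₂ : List V)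
    (h₁ : γ₁.head? = some v) (h₂ : γ₂.head? = some v)
    (hc₁ : γ₁.count v = 1) (hc₂ : γ₂.count v = 1) (hne : γ₁ ≠ γ₂) :
    let x := γ₁ ++ γ₁ ++ γ₂ ++ γ₂ ++ γ₁
    let y := γ₁ ++ γ₂ ++ γ₁ ++ γ₂ ++ γ₁
    let l := 3 * γ₁.length + 2 * γ₂.length
    x ≠ y ∧ x.length = l ∧ y.length = l ∧
      ∀ u₁ u₂ w : List V, (u₁ = x ∨ u₁ = y) → (u₂ = x ∨ u₂ = y) →
        (w = x ∨ w = y) → ∀ i : ℕ, i + l ≤ 2 * l →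
          ((u₁ ++ u₂).drop i).take l = w → i = 0 ∨ i = l := by
  intro x y l
  obtain ⟨hx, hy, hl⟩ :
      x = γ₁ ++ γ₁ ++ γ₂ ++ γ₂ ++ γ₁ ∧ y = γ₁ ++ γ₂ ++ γ₁ ++ γ₂ ++ γ₁ ∧
        l = 3 * γ₁.length + 2 * γ₂.length := ⟨rfl, rfl, rfl⟩
  clear_value x y l
  subst hx hy hl
  refine ⟨?_, ?_, ?_, ?_⟩
  · intro hxy
    simp only [List.append_assoc] at hxy
    have h5 := List.append_cancel_left hxy
    exact hne (match_blk h₁ hc₁ h₂ hc₂ (head_append h₂) (head_append h₁)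
      ⟨[], by simpa using h5⟩)
  · simp only [List.length_append]; omega
  · simp only [List.length_append]; omega
  · rintro u₁ u₂ w (rfl | rfl) (rfl | rfl) (rfl | rfl) i hi hw <;>
      [ exact recog_aux h₁ h₂ hc₁ hc₂ hne _ _ _ (Or.inl rfl) (Or.inl rfl) (Or.inl rfl) i hi
          (by simpa [List.flatten_cons, List.append_assoc] using hw);
        exact recog_aux h₁ h₂ hc₁ hc₂ hne _ _ _ (Or.inl rfl) (Or.inl rfl) (Or.inr rfl) i hi
          (by simpa [List.flatten_cons, List.append_assoc] using hw);
        exact recog_aux h₁ h₂ hc₁ hc₂ hne _ _ _ (Or.inl rfl) (Or.inr rfl) (Or.inl rfl) i hi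
          (by simpa [List.flatten_cons, List.append_assoc] using hw);
        exact recog_aux h₁ h₂ hc₁ hc₂ hne _ _ _ (Or.inl rfl) (Or.inr rfl) (Or.inr rfl) i hi
          (by simpa [List.flatten_cons, List.append_assoc] using hw);
        exact recog_aux h₁ h₂ hc₁ hc₂ hne _ _ _ (Or.inr rfl) (Or.inl rfl) (Or.inl rfl) i hi
          (by simpa [List.flatten_cons, List.append_assoc] using hw);
        exact recog_aux h₁ h₂ hc₁ hc₂ hne _ _ _ (Or.inr rfl) (Or.inl rfl) (Or.inr rfl) i hi
          (by simpa [List.flatten_cons, List.append_assoc] using hw);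
        exact recog_aux h₁ h₂ hc₁ hc₂ hne _ _ _ (Or.inr rfl) (Or.inr rfl) (Or.inl rfl) i hi
          (by simpa [List.flatten_cons, List.append_assoc] using hw);
        exact recog_aux h₁ h₂ hc₁ hc₂ hne _ _ _ (Or.inr rfl) (Or.inr rfl) (Or.inr rfl) i hi
          (by simpa [List.flatten_cons, List.append_assoc] using hw)]
end

section
/- There exists a topological dynamical system (Y, T) with positive topological entropy, a point z ∈ Y, and a continuous function F : Y → ℝ with limsup_{N→∞} (1/N) |Σ_{n=1}^{N} μ(n) F(Tⁿ z)| > 0; that is, Sarnak's orthogonality conclusion fails for some positive-entropy system. -/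
open Filter Finset ArithmeticFunction

section Aux

open Dynamics UniformSpace ENNReal EReal
open scoped Uniformity

/-! ### Counting squarefree numbers -/

private lemma sum_inv_sq_le' : ∀ N : ℕ, 2 ≤ N → ∑ k ∈ Icc 2 N, (1:ℝ)/(k*k) ≤ 3/4 - 1/N := by
  intro N hN
  induction N with
  | zero => omega
  | succ n ih =>
    rcases Nat.lt_or_ge n 2 with h | h
    · interval_cases n
      · omega
      · norm_num
    · rw [Finset.sum_Icc_succ_top (by omega)]
      have hn : (0:ℝ) < n := by positivity
      have hn1 : (0:ℝ) < (n:ℝ) + 1 := by positivity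
      have key : (1:ℝ)/((n+1)*(n+1)) ≤ 1/n - 1/(n+1) := by
        rw [div_sub_div _ _ (ne_of_gt hn) (ne_of_gt hn1)]
        rw [div_le_div_iff₀ (by positivity) (by positivity)]
        nlinarith
      have := ih h
      push_cast
      push_cast at this
      nlinarith

private lemma bad_subset' (N : ℕ) :
    {n ∈ Icc 1 N | ¬ Squarefree n} ⊆ (Icc 2 N).biUnion (fun k => {n ∈ Icc 1 N | k*k ∣ n}) := by
  intro n hn
  simp only [mem_filter, mem_Icc] at hn
  obtain ⟨⟨h1, h2⟩, hns⟩ := hn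
  rw [Nat.squarefree_iff_prime_squarefree] at hns
  push_neg at hns
  obtain ⟨p, hp, hdvd⟩ := hns
  refine Finset.mem_biUnion.2 ⟨p, ?_, ?_⟩
  · refine mem_Icc.2 ⟨hp.two_le, ?_⟩
    calc p ≤ p * p := Nat.le_mul_of_pos_left p hp.pos
    _ ≤ n := Nat.le_of_dvd (by omega) hdvd
    _ ≤ N := h2
  · exact mem_filter.2 ⟨mem_Icc.2 ⟨h1, h2⟩, hdvd⟩

private lemma card_squarefree_ge' (N : ℕ) (hN : 1 ≤ N) :
    (N:ℝ)/4 ≤ ({n ∈ Icc 1 N | Squarefree n}).card := by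
  rcases Nat.lt_or_ge N 2 with h | h
  · interval_cases N
    norm_num [Finset.filter_singleton, squarefree_one]
  have hbad : ({n ∈ Icc 1 N | ¬ Squarefree n}).card ≤ ∑ k ∈ Icc 2 N, N / (k*k) := by
    calc ({n ∈ Icc 1 N | ¬ Squarefree n}).card
        ≤ ((Icc 2 N).biUnion (fun k => {n ∈ Icc 1 N | k*k ∣ n})).card :=
          Finset.card_le_card (bad_subset' N)
      _ ≤ ∑ k ∈ Icc 2 N, ({n ∈ Icc 1 N | k*k ∣ n}).card := Finset.card_biUnion_le
      _ = ∑ k ∈ Icc 2 N, N / (k*k) := by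
          refine Finset.sum_congr rfl fun k _ => ?_
          have : Icc 1 N = Ioc 0 N := rfl
          rw [this, Nat.Ioc_filter_dvd_card_eq_div]
  have hbadR : (({n ∈ Icc 1 N | ¬ Squarefree n}).card : ℝ) ≤ 3*N/4 - 1 := by
    have h1 : (({n ∈ Icc 1 N | ¬ Squarefree n}).card : ℝ) ≤ ∑ k ∈ Icc 2 N, ((N / (k*k) : ℕ) : ℝ) := by
      exact_mod_cast Nat.cast_le.2 hbad
    have h2 : ∑ k ∈ Icc 2 N, ((N / (k*k) : ℕ) : ℝ) ≤ ∑ k ∈ Icc 2 N, (N:ℝ) * (1/(k*k)) := by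
      refine Finset.sum_le_sum fun k hk => ?_
      have h3 : ((N / (k*k) : ℕ) : ℝ) ≤ (N:ℝ)/((k:ℝ)*(k:ℝ)) := by
        calc ((N / (k*k) : ℕ) : ℝ) ≤ (N:ℝ)/((k*k : ℕ):ℝ) := Nat.cast_div_le
        _ = (N:ℝ)/((k:ℝ)*(k:ℝ)) := by push_cast; ring
      calc ((N / (k*k) : ℕ) : ℝ) ≤ (N:ℝ)/((k:ℝ)*(k:ℝ)) := h3
      _ = (N:ℝ) * (1/(k*k)) := by ring
    have h4 : ∑ k ∈ Icc 2 N, (N:ℝ) * (1/(k*k)) = (N:ℝ) * ∑ k ∈ Icc 2 N, (1:ℝ)/(k*k) := by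
      rw [Finset.mul_sum]
    have h5 := sum_inv_sq_le' N h
    have hNpos : (0:ℝ) < N := by positivity
    have h6 : (N:ℝ) * ∑ k ∈ Icc 2 N, (1:ℝ)/(k*k) ≤ (N:ℝ) * (3/4 - 1/N) :=
      mul_le_mul_of_nonneg_left h5 (le_of_lt hNpos)
    have h7 : (N:ℝ) * (3/4 - 1/N) = 3*N/4 - 1 := by
      field_simp
    linarith
  have hsplit : ({n ∈ Icc 1 N | Squarefree n}).card + ({n ∈ Icc 1 N | ¬ Squarefree n}).card = N := by
    rw [Finset.card_filter_add_card_filter_not, Nat.card_Icc]; omega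
  have : (({n ∈ Icc 1 N | Squarefree n}).card : ℝ) = (N:ℝ) - ({n ∈ Icc 1 N | ¬ Squarefree n}).card := by
    have h8 : ((({n ∈ Icc 1 N | Squarefree n}).card + ({n ∈ Icc 1 N | ¬ Squarefree n}).card : ℕ) : ℝ) = (N:ℝ) := by
      rw [hsplit]
    push_cast at h8
    linarith
  rw [this]
  linarith

/-! ### The full shift on three symbols -/

instance uFin3 : UniformSpace (Fin 3) := ⊥

noncomputable def Ymet : MetricSpace (ℕ → Fin 3) :=
  PiNat.metricSpaceOfDiscreteUniformity (fun _ => rfl)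

attribute [local instance] Ymet

def shiftT : (ℕ → Fin 3) → (ℕ → Fin 3) := fun y n => y (n + 1)

lemma shiftT_iterate (y : ℕ → Fin 3) (n k : ℕ) : shiftT^[n] y k = y (k + n) := by
  induction n generalizing y with
  | zero => simp
  | succ m ih =>
    rw [Function.iterate_succ_apply, ih (shiftT y)]
    simp [shiftT]; ring_nf

lemma shiftT_continuous : Continuous shiftT :=
  continuous_pi fun n => continuous_apply (n + 1)

def U0 : Set ((ℕ → Fin 3) × (ℕ → Fin 3)) := {p | p.1 0 = p.2 0}

lemma U0_mem : U0 ∈ 𝓤 (ℕ → Fin 3) := by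
  have : 𝓤 (ℕ → Fin 3) = ⨅ i : ℕ, (Filter.comap fun a : (ℕ → Fin 3) × (ℕ → Fin 3) => (a.1 i, a.2 i)) (𝓤 (Fin 3)) :=
    Pi.uniformity (fun _ : ℕ => Fin 3)
  rw [this]
  refine mem_iInf_of_mem 0 ?_
  refine ⟨SetRel.id, ?_, ?_⟩
  · exact Filter.mem_principal_self SetRel.id
  · intro a ha
    simpa [U0, SetRel.id] using ha

noncomputable def extend (n : ℕ) (f : Fin n → Fin 3) : ℕ → Fin 3 :=
  fun k => if h : k < n then f ⟨k, h⟩ else 0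

lemma extend_inj (n : ℕ) : Function.Injective (extend n) := by
  intro f g h
  funext i
  have := congrFun h i
  simpa [extend, i.isLt] using this

lemma net_lower (n : ℕ) : ((3:ℕ)^n : ℕ∞) ≤ netMaxcard shiftT Set.univ U0 n := by
  classical
  set s : Finset (ℕ → Fin 3) := Finset.image (extend n) Finset.univ with hs
  have hcard : s.card = 3^n := by
    rw [hs, Finset.card_image_of_injective _ (extend_inj n)]
    simp [Finset.card_univ]
  have hnet : IsDynNetIn shiftT Set.univ U0 n ↑s := by
    constructor
    · exact Set.subset_univ _
    · intro x hx y hy hxy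
      refine Set.disjoint_left.2 fun z hzx hzy => hxy ?_
      simp only [ball, Set.mem_preimage, mem_dynEntourage] at hzx hzy
      funext k
      rcases Nat.lt_or_ge k n with hk | hk
      · have h1 : x k = z k := by
          have := hzx k hk
          simpa [U0, shiftT_iterate] using this
        have h2 : y k = z k := by
          have := hzy k hk
          simpa [U0, shiftT_iterate] using this
        rw [h1, h2]
      · simp only [hs, Finset.coe_image, Set.mem_image] at hx hy
        obtain ⟨f, -, rfl⟩ := hx
        obtain ⟨g, -, rfl⟩ := hy
        simp [extend, Nat.not_lt.2 hk]
  have := hnet.card_le_netMaxcard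
  rw [hcard] at this
  exact_mod_cast this

lemma shift_entropy_pos : 0 < coverEntropy shiftT (Set.univ : Set (ℕ → Fin 3)) := by
  have key : (Real.log 3 : EReal) ≤ netEntropyEntourage shiftT Set.univ U0 := by
    apply Filter.le_limsup_of_frequently_le'
    rw [Filter.frequently_atTop]
    intro a
    refine ⟨max a 1, le_max_left a 1, ?_⟩
    set n := max a 1
    have hn : 1 ≤ n := le_max_right a 1
    have hlog : ((Real.log 3 : EReal) * n) ≤ log (netMaxcard shiftT Set.univ U0 n) := by
      have h1 : log (((3:ℕ)^n : ℕ∞) : ℝ≥0∞) ≤ log (netMaxcard shiftT Set.univ U0 n) :=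
        log_monotone (ENat.toENNReal_le.2 (net_lower n))
      have h2 : log (((3:ℕ)^n : ℕ∞) : ℝ≥0∞) = (n : EReal) * Real.log 3 := by
        rw [ENat.toENNReal_pow, log_pow]
        congr 1
        rw [log_pos_real' (by norm_num)]
        norm_num
      rw [h2] at h1
      rw [mul_comm] at h1
      exact h1
    rw [EReal.le_div_iff_mul_le (by exact_mod_cast hn : (0:EReal) < (n:EReal)) (natCast_ne_top n)]
    exact hlog
  have hpos : (0 : EReal) < Real.log 3 := by
    exact_mod_cast Real.log_pos (by norm_num)
  calc (0:EReal) < (Real.log 3 : EReal) := hpos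
  _ ≤ netEntropyEntourage shiftT Set.univ U0 := key
  _ ≤ coverEntropy shiftT Set.univ := netEntropyEntourage_le_coverEntropy shiftT Set.univ U0_mem

/-! ### The Möbius point and observable -/

noncomputable def zpt : ℕ → Fin 3 :=
  fun n => if moebius n = 1 then 2 else if moebius n = -1 then 0 else 1

noncomputable def Ffun : (ℕ → Fin 3) → ℝ := fun y => ((y 0 : ℕ) : ℝ) - 1

lemma moebius_trichotomy (n : ℕ) : moebius n = 1 ∨ moebius n = -1 ∨ moebius n = 0 := by
  by_cases h : Squarefree n
  · have h2 := moebius_sq_eq_one_of_squarefree h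
    have : IsUnit (moebius n) := IsUnit.of_mul_eq_one (moebius n) (by rw [← sq]; exact h2)
    rcases Int.isUnit_iff.1 this with h' | h'
    · exact Or.inl h'
    · exact Or.inr (Or.inl h')
  · exact Or.inr (Or.inr (moebius_eq_zero_of_not_squarefree h))

lemma key_term (n : ℕ) :
    (moebius n : ℝ) * (((zpt n : ℕ) : ℝ) - 1) = if Squarefree n then 1 else 0 := by
  rcases moebius_trichotomy n with h | h | h
  · have hsq : Squarefree n := moebius_ne_zero_iff_squarefree.1 (by rw [h]; norm_num)
    simp [zpt, h, hsq]
    norm_num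
  · have hsq : Squarefree n := moebius_ne_zero_iff_squarefree.1 (by rw [h]; norm_num)
    simp [zpt, h, hsq]
  · have hsq : ¬ Squarefree n := by
      intro hc
      exact moebius_ne_zero_iff_squarefree.2 hc h
    simp [h, hsq]

lemma Ffun_continuous : Continuous Ffun := by
  have h1 : Continuous fun y : ℕ → Fin 3 => y 0 := continuous_apply 0
  have h2 : Continuous fun i : Fin 3 => ((i : ℕ) : ℝ) - 1 := by continuity
  exact h2.comp h1

lemma sum_eq_card (N : ℕ) :
    ∑ n ∈ Finset.Icc 1 N, (moebius n : ℝ) * Ffun (shiftT^[n] zpt)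
      = ({n ∈ Icc 1 N | Squarefree n}).card := by
  have h1 : ∀ n, Ffun (shiftT^[n] zpt) = ((zpt n : ℕ) : ℝ) - 1 := by
    intro n
    simp [Ffun, shiftT_iterate]
  calc ∑ n ∈ Finset.Icc 1 N, (moebius n : ℝ) * Ffun (shiftT^[n] zpt)
      = ∑ n ∈ Finset.Icc 1 N, (if Squarefree n then (1:ℝ) else 0) := by
        refine Finset.sum_congr rfl fun n _ => ?_
        rw [h1 n, key_term n]
    _ = ({n ∈ Icc 1 N | Squarefree n}).card := by
        rw [Finset.sum_boole]

end Aux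

/-- There exists a topological dynamical system (a compact metric space with a
continuous self-map) with positive topological entropy, a point `z` and a
continuous function `F` whose Möbius correlations do not vanish: Sarnak's
orthogonality conclusion fails for some positive-entropy system. -/
theorem exists_positive_entropy_system_not_moebius_orthogonal :
    ∃ (Y : Type) (_ : MetricSpace Y) (_ : CompactSpace Y) (T : Y → Y),
      Continuous T ∧ 0 < Dynamics.coverEntropy T Set.univ ∧
      ∃ (z : Y) (F : Y → ℝ), Continuous F ∧
        0 < Filter.limsup
          (fun N : ℕ => (1 / N : ℝ) *
            |∑ n ∈ Finset.Icc 1 N, (moebius n : ℝ) * F (T^[n] z)|)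
          Filter.atTop := by
  classical
  letI : MetricSpace (ℕ → Fin 3) := Ymet
  refine ⟨ℕ → Fin 3, Ymet, (by exact Pi.compactSpace), shiftT, shiftT_continuous, shift_entropy_pos,
    zpt, Ffun, Ffun_continuous, ?_⟩
  set f : ℕ → ℝ := fun N => (1 / N : ℝ) *
      |∑ n ∈ Finset.Icc 1 N, (moebius n : ℝ) * Ffun (shiftT^[n] zpt)| with hf
  have habs : ∀ N : ℕ, |∑ n ∈ Finset.Icc 1 N, (moebius n : ℝ) * Ffun (shiftT^[n] zpt)|
      = (({n ∈ Finset.Icc 1 N | Squarefree n}).card : ℝ) := by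
    intro N
    rw [sum_eq_card N, abs_of_nonneg (by positivity)]
  have hbdd : Filter.IsBoundedUnder (· ≤ ·) Filter.atTop f := by
    refine Filter.isBoundedUnder_of ⟨1, fun N => ?_⟩
    rcases Nat.eq_zero_or_pos N with h | h
    · simp [hf, h]
    · have hNpos : (0:ℝ) < N := by exact_mod_cast h
      have hcard : (({n ∈ Finset.Icc 1 N | Squarefree n}).card : ℝ) ≤ N := by
        have := Finset.card_filter_le (Finset.Icc 1 N) (fun n => Squarefree n)
        have h2 : (Finset.Icc 1 N).card = N := by rw [Nat.card_Icc]; omega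
        exact_mod_cast h2 ▸ this
      rw [hf]
      simp only [habs N]
      calc (1/(N:ℝ)) * (({n ∈ Finset.Icc 1 N | Squarefree n}).card : ℝ)
          ≤ (1/(N:ℝ)) * N := by gcongr
        _ = 1 := by field_simp
  have hfreq : ∃ᶠ N : ℕ in Filter.atTop, (1/4 : ℝ) ≤ f N := by
    refine Filter.Eventually.frequently ?_
    filter_upwards [Filter.eventually_ge_atTop 1] with N hN
    have hNpos : (0:ℝ) < N := by exact_mod_cast hN
    have hcard := card_squarefree_ge' N hN
    rw [hf]
    simp only [habs N]
    calc (1/4:ℝ) = (1/(N:ℝ)) * ((N:ℝ)/4) := by field_simp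
      _ ≤ (1/(N:ℝ)) * (({n ∈ Finset.Icc 1 N | Squarefree n}).card : ℝ) := by gcongr
  have := Filter.le_limsup_of_frequently_le hfreq hbdd
  linarith
end
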